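/- arXiv:1709.06163 — 7 statements merged into one kernel-verified Lean document; each statement's English description precedes it below -/
import Mathlib

section
/- Let 3 ≤ t ≤ r+1 and let G be a finite simple graph with m edges and maximum degree at most r. Then C(t,2)·k_t(G) ≤ m·C(r−1,t−2); equivalently, k_t(G) ≤ m·C(r+1,t)/C(r+1,2). -/
open scoped Classical

open Finset SimpleGraph

noncomputable def sym2ToFinset {V : Type} [DecidableEq V] : Sym2 V → Finset V :=
  Sym2.lift ⟨fun a b => {a, b}, fun a b => Finset.pair_comm a b⟩

@[simp] lemma sym2ToFinset_mk {V : Type} [DecidableEq V] (a b : V) :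
    sym2ToFinset s(a, b) = {a, b} := rfl

/-- If `3 ≤ t ≤ r+1` and `G` has `m` edges and maximum degree at most `r`, then
`C(t,2)·k_t(G) ≤ m·C(r−1,t−2)` (equivalently `k_t(G) ≤ m·C(r+1,t)/C(r+1,2)`). -/
theorem kt_le_of_maxDegree_le {V : Type} [Fintype V] [DecidableEq V]
    (G : SimpleGraph V) (t r m : ℕ)
    (ht : 3 ≤ t) (htr : t ≤ r + 1)
    (hm : G.edgeFinset.card = m) (hΔ : G.maxDegree ≤ r) :
    t.choose 2 * (G.cliqueFinset t).card ≤ m * (r - 1).choose (t - 2) := by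
  classical
  set A := G.cliqueFinset t with hAdef
  set B := G.edgeFinset with hBdef
  -- Each t-clique contains exactly C(t,2) edges.
  have hA : ∀ K ∈ A, (B.filter (fun e => ∀ x ∈ e, x ∈ K)).card = t.choose 2 := by
    intro K hK
    rw [hAdef, mem_cliqueFinset_iff] at hK
    obtain ⟨hKc, hKcard⟩ := hK
    rw [← hKcard, ← Finset.card_powersetCard 2 K]
    apply Finset.card_bij (fun e _ => sym2ToFinset e)
    · intro e he
      simp only [Finset.mem_filter] at he
      obtain ⟨heB, heK⟩ := he
      induction e using Sym2.ind with
      | _ a b =>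
        have hadj : G.Adj a b := by
          rwa [hBdef, mem_edgeFinset, mem_edgeSet] at heB
        simp only [sym2ToFinset_mk, Finset.mem_powersetCard]
        refine ⟨?_, Finset.card_pair hadj.ne⟩
        intro x hx
        rcases Finset.mem_insert.1 hx with h | h
        · exact h ▸ heK a (Sym2.mem_mk_left a b)
        · exact (Finset.mem_singleton.1 h) ▸ heK b (Sym2.mem_mk_right a b)
    · intro e1 h1 e2 h2 heq
      simp only [Finset.mem_filter] at h1 h2
      induction e1 using Sym2.ind with
      | _ a b =>
      induction e2 using Sym2.ind with
      | _ c d =>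
      have hab : G.Adj a b := by
        have := h1.1; rwa [hBdef, mem_edgeFinset, mem_edgeSet] at this
      simp only [sym2ToFinset_mk] at heq
      have ha : a ∈ ({c, d} : Finset V) := heq ▸ Finset.mem_insert_self a {b}
      have hb : b ∈ ({c, d} : Finset V) := heq ▸ Finset.mem_insert_of_mem (Finset.mem_singleton_self b)
      rcases Finset.mem_insert.1 ha with h | h <;>
        rcases Finset.mem_insert.1 hb with h' | h'
      · exact absurd (h.trans h'.symm) hab.ne
      · rw [h, Finset.mem_singleton.1 h']
      · rw [Finset.mem_singleton.1 h, h']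
        exact Sym2.eq_swap
      · exact absurd ((Finset.mem_singleton.1 h).trans (Finset.mem_singleton.1 h').symm) hab.ne
    · intro S hS
      rw [Finset.mem_powersetCard] at hS
      obtain ⟨hSK, hS2⟩ := hS
      obtain ⟨a, b, hab, rfl⟩ := Finset.card_eq_two.1 hS2
      have haK : a ∈ K := hSK (Finset.mem_insert_self a {b})
      have hbK : b ∈ K := hSK (Finset.mem_insert_of_mem (Finset.mem_singleton_self b))
      have hadj : G.Adj a b := hKc haK hbK hab
      refine ⟨s(a, b), ?_, rfl⟩
      simp only [Finset.mem_filter]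
      constructor
      · rw [hBdef, mem_edgeFinset, mem_edgeSet]; exact hadj
      · intro x hx
        rcases Sym2.mem_iff.1 hx with h | h
        · exact h ▸ haK
        · exact h ▸ hbK
  -- Each edge lies in at most C(r-1,t-2) t-cliques.
  have hB : ∀ e ∈ B, (A.filter (fun K => ∀ x ∈ e, x ∈ K)).card ≤ (r - 1).choose (t - 2) := by
    intro e he
    induction e using Sym2.ind with
    | _ u v =>
      have hadj : G.Adj u v := by
        rwa [hBdef, mem_edgeFinset, mem_edgeSet] at he
      set N := G.neighborFinset u ∩ G.neighborFinset v with hNdef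
      have hNcard : N.card ≤ r - 1 := by
        have hsub : N ⊆ G.neighborFinset u \ {v} := by
          intro x hx
          rw [hNdef, Finset.mem_inter] at hx
          rw [Finset.mem_sdiff, Finset.mem_singleton]
          exact ⟨hx.1, fun h => G.irrefl (h ▸ (mem_neighborFinset G v x).1 hx.2)⟩
        calc N.card ≤ (G.neighborFinset u \ {v}).card := Finset.card_le_card hsub
          _ = G.degree u - 1 := by
              rw [Finset.card_sdiff_of_subset (Finset.singleton_subset_iff.2 ((mem_neighborFinset G u v).2 hadj))]
              rw [Finset.card_singleton]
              rfl
          _ ≤ r - 1 := Nat.sub_le_sub_right ((G.degree_le_maxDegree u).trans hΔ) 1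
      have hinj : ((A.filter (fun K => ∀ x ∈ s(u,v), x ∈ K))).card ≤ (N.powersetCard (t - 2)).card := by
        apply Finset.card_le_card_of_injOn (fun K => K \ {u, v})
        · intro K hK
          simp only [Finset.mem_coe, Finset.mem_filter] at hK
          obtain ⟨hKA, hKe⟩ := hK
          rw [hAdef, mem_cliqueFinset_iff] at hKA
          obtain ⟨hKc, hKcard⟩ := hKA
          have huK : u ∈ K := hKe u (Sym2.mem_mk_left u v)
          have hvK : v ∈ K := hKe v (Sym2.mem_mk_right u v)
          rw [Finset.mem_coe, Finset.mem_powersetCard]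
          constructor
          · intro x hx
            rw [Finset.mem_sdiff, Finset.mem_insert, Finset.mem_singleton] at hx
            push_neg at hx
            obtain ⟨hxK, hxu, hxv⟩ := hx
            rw [hNdef, Finset.mem_inter, mem_neighborFinset, mem_neighborFinset]
            exact ⟨(hKc hxK huK hxu).symm, (hKc hxK hvK hxv).symm⟩
          · rw [Finset.card_sdiff_of_subset, hKcard, Finset.card_pair hadj.ne]
            intro x hx
            rcases Finset.mem_insert.1 hx with h | h
            · exact h ▸ huK
            · exact (Finset.mem_singleton.1 h) ▸ hvK
        · intro K1 hK1 K2 hK2 heq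
          have heq' : K1 \ {u, v} = K2 \ {u, v} := heq
          simp only [Finset.coe_filter, Set.mem_setOf_eq] at hK1 hK2
          ext x
          by_cases hxu : x = u
          · subst hxu
            simp [hK1.2 x (Sym2.mem_mk_left x v), hK2.2 x (Sym2.mem_mk_left x v)]
          by_cases hxv : x = v
          · subst hxv
            simp [hK1.2 x (Sym2.mem_mk_right u x), hK2.2 x (Sym2.mem_mk_right u x)]
          constructor <;> intro hx
          · have : x ∈ K1 \ {u, v} := by
              rw [Finset.mem_sdiff]; simp [hx, hxu, hxv]
            rw [heq', Finset.mem_sdiff] at this; exact this.1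
          · have : x ∈ K2 \ {u, v} := by
              rw [Finset.mem_sdiff]; simp [hx, hxu, hxv]
            rw [← heq', Finset.mem_sdiff] at this; exact this.1
      calc (A.filter (fun K => ∀ x ∈ s(u,v), x ∈ K)).card
          ≤ (N.powersetCard (t - 2)).card := hinj
        _ = N.card.choose (t - 2) := Finset.card_powersetCard _ _
        _ ≤ (r - 1).choose (t - 2) := Nat.choose_le_choose _ hNcard
  -- Double counting.
  have key : ∑ K ∈ A, (B.filter (fun e => ∀ x ∈ e, x ∈ K)).card
      = ∑ e ∈ B, (A.filter (fun K => ∀ x ∈ e, x ∈ K)).card := by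
    simp_rw [Finset.card_filter]
    exact Finset.sum_comm
  calc t.choose 2 * A.card = ∑ K ∈ A, t.choose 2 := by rw [Finset.sum_const, smul_eq_mul, mul_comm]
    _ = ∑ K ∈ A, (B.filter (fun e => ∀ x ∈ e, x ∈ K)).card := (Finset.sum_congr rfl hA).symm
    _ = ∑ e ∈ B, (A.filter (fun K => ∀ x ∈ e, x ∈ K)).card := key
    _ ≤ ∑ e ∈ B, (r - 1).choose (t - 2) := Finset.sum_le_sum hB
    _ = m * (r - 1).choose (t - 2) := by rw [Finset.sum_const, smul_eq_mul, hm]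
end

section
/- Let t ≥ 3, r ≥ 1, and m ≥ 1. Assume that for every m' ≤ m−1, every finite simple graph H with m' edges and maximum degree at most r satisfies k_t(H) ≤ g_t(m', r). If G is a finite simple graph with m edges and maximum degree at most r that is not connected (disregarding isolated vertices, i.e., its edge set splits into two nonempty parts with no vertex in common), then k_t(G) ≤ g_t(m, r). -/
open scoped Classical

/-- `gVal t r m = k_t(aK_{r+1} ∪ 𝒞(b)) = a·C(r+1,t) + C(c,t) + C(d,t−1)`, where
`m = a·C(r+1,2) + b` with `0 ≤ b < C(r+1,2)`, and `b = C(c,2) + d` with `0 ≤ d < c`. -/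
def gVal (t r m : ℕ) : ℕ :=
  let b := m % (r + 1).choose 2
  let c := Nat.findGreatest (fun c => c.choose 2 ≤ b) (b + 1)
  (m / (r + 1).choose 2) * (r + 1).choose t + c.choose t + (b - c.choose 2).choose (t - 1)

namespace GValAux

/-- clique count of colex graph with `b` edges, for clique size `t`. -/
def fC (t b : ℕ) : ℕ :=
  (Nat.findGreatest (fun c => c.choose 2 ≤ b) (b + 1)).choose t
    + (b - (Nat.findGreatest (fun c => c.choose 2 ≤ b) (b + 1)).choose 2).choose (t - 1)

lemma gVal_eq (t r m : ℕ) :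
    gVal t r m = (m / (r + 1).choose 2) * (r + 1).choose t + fC t (m % (r + 1).choose 2) := by
  simp [gVal, fC, Nat.add_assoc]

lemma T_succ (c : ℕ) : (c + 1).choose 2 = c.choose 2 + c := by
  rw [Nat.choose_succ_succ' c 1]; simp [Nat.add_comm]

lemma le_T_succ (c : ℕ) : c ≤ c.choose 2 + 1 := by
  induction c with
  | zero => simp
  | succ n ih => rw [T_succ]; omega

/-- canonical representation is recognized by `findGreatest`. -/
lemma findGreatest_rep {c e : ℕ} (hc : 1 ≤ c) (he : e < c) :
    Nat.findGreatest (fun x => x.choose 2 ≤ c.choose 2 + e) (c.choose 2 + e + 1) = c := by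
  rw [Nat.findGreatest_eq_iff]
  refine ⟨by have := le_T_succ c; omega, fun _ => Nat.le_add_right _ _, fun n hn _ h => ?_⟩
  have h1 : (c + 1).choose 2 ≤ n.choose 2 := Nat.choose_le_choose 2 hn
  rw [T_succ] at h1
  omega

/-- every `b` has a canonical representation. -/
lemma exists_rep (b : ℕ) : ∃ c e, 1 ≤ c ∧ e < c ∧ b = c.choose 2 + e := by
  set c := Nat.findGreatest (fun x => x.choose 2 ≤ b) (b + 1) with hc
  have h1 : 1 ≤ c := Nat.le_findGreatest (by omega) (by simp)
  have h2 : c.choose 2 ≤ b := Nat.findGreatest_spec (P := fun x => x.choose 2 ≤ b)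
    (m := 1) (by omega) (by simp)
  refine ⟨c, b - c.choose 2, h1, ?_, by omega⟩
  by_contra h
  push_neg at h
  have h3 : (c + 1).choose 2 ≤ b := by rw [T_succ]; omega
  have h4 : c + 1 ≤ b + 1 := by have := le_T_succ (c + 1); omega
  have := Nat.le_findGreatest (P := fun x => x.choose 2 ≤ b) h4 h3
  omega

lemma fC_eval {t c e : ℕ} (hc : 1 ≤ c) (he : e < c) :
    fC t (c.choose 2 + e) = c.choose t + e.choose (t - 1) := by
  rw [fC, findGreatest_rep hc he, Nat.add_sub_cancel_left]

/-- window formula inside one block, allowing the right endpoint of the block. -/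
lemma fC_block {k c e : ℕ} (hc : 1 ≤ c) (he : e ≤ c) :
    fC (k + 3) (c.choose 2 + e) = c.choose (k + 3) + e.choose (k + 2) := by
  rcases Nat.lt_or_ge e c with h | h
  · have := fC_eval (t := k + 3) hc h; simpa using this
  · have hec : e = c := le_antisymm he h
    rw [hec]
    have h0 : c.choose 2 + c = (c + 1).choose 2 + 0 := by rw [T_succ]; omega
    rw [h0, fC_eval (by omega) (by omega)]
    have : (c + 1).choose (k + 3) = c.choose (k + 2) + c.choose (k + 3) :=
      Nat.choose_succ_succ' c (k + 2)
    simp [this]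
    omega

/-- discrete convexity of `choose` in the top argument. -/
lemma choose_convex (j s : ℕ) {m p : ℕ} (h : m ≤ p) :
    (m + s).choose (j + 1) + p.choose (j + 1) ≤ m.choose (j + 1) + (p + s).choose (j + 1) := by
  induction s with
  | zero => simp
  | succ n ih =>
    have h1 : (m + n + 1).choose (j + 1) = (m + n).choose j + (m + n).choose (j + 1) :=
      Nat.choose_succ_succ' (m + n) j
    have h2 : (p + n + 1).choose (j + 1) = (p + n).choose j + (p + n).choose (j + 1) :=
      Nat.choose_succ_succ' (p + n) j
    have h3 : (m + n).choose j ≤ (p + n).choose j := Nat.choose_le_choose j (by omega)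
    have h4 : (m + (n+1)).choose (j+1) = (m + n + 1).choose (j+1) := by ring_nf
    have h5 : (p + (n+1)).choose (j+1) = (p + n + 1).choose (j+1) := by ring_nf
    rw [h4, h5, h1, h2]
    omega

end GValAux

namespace GValAux

/-- Lower bound: a window of length `e ≤ a` starting at position `≥ C(a,2)` has weight at
least the initial window of length `e`, i.e. `C(e,t-1)`. -/
lemma window_lower (k a e z : ℕ) (hea : e ≤ a) (hz : a.choose 2 ≤ z) :
    e.choose (k + 2) + fC (k + 3) z ≤ fC (k + 3) (z + e) := by
  obtain ⟨c, d0, hc1, hd0, rfl⟩ := exists_rep z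
  have hca : a ≤ c := by
    by_contra h
    push_neg at h
    have h1 : (c + 1).choose 2 ≤ a.choose 2 := Nat.choose_le_choose 2 (by omega)
    rw [T_succ] at h1
    omega
  have hfz : fC (k + 3) (c.choose 2 + d0) = c.choose (k + 3) + d0.choose (k + 2) :=
    fC_block hc1 (by omega)
  rcases le_or_gt (d0 + e) c with h | h
  · have hfze : fC (k + 3) (c.choose 2 + d0 + e) = c.choose (k + 3) + (d0 + e).choose (k + 2) := by
      rw [Nat.add_assoc]; exact fC_block hc1 h
    have hcc : (0 + e).choose (k + 2) + d0.choose (k + 2)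
        ≤ (0 : ℕ).choose (k + 2) + (d0 + e).choose (k + 2) :=
      choose_convex (k + 1) e (Nat.zero_le d0)
    simp only [Nat.zero_add, Nat.choose_zero_succ] at hcc
    omega
  · -- window crosses the boundary into block `c+1`
    set β := d0 + e - c with hβ
    have hze : c.choose 2 + d0 + e = (c + 1).choose 2 + β := by rw [T_succ]; omega
    have hfze : fC (k + 3) (c.choose 2 + d0 + e)
        = (c + 1).choose (k + 3) + β.choose (k + 2) := by
      rw [hze]; exact fC_block (by omega) (by omega)
    have hpas : (c + 1).choose (k + 3) = c.choose (k + 2) + c.choose (k + 3) :=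
      Nat.choose_succ_succ' c (k + 2)
    have hβe : β ≤ e := by omega
    have h1 : β + (c - e) = d0 := by omega
    have h2 : e + (c - e) = c := by omega
    have hcc : (β + (c - e)).choose (k + 2) + e.choose (k + 2)
        ≤ β.choose (k + 2) + (e + (c - e)).choose (k + 2) :=
      choose_convex (k + 1) (c - e) hβe
    rw [h1, h2] at hcc
    omega

/-- Adding `C(a,2)` edges gains at least `C(a,t)` cliques. -/
lemma add_block (k a y : ℕ) :
    a.choose (k + 3) + fC (k + 3) y ≤ fC (k + 3) (y + a.choose 2) := by
  induction a with
  | zero => simp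
  | succ a ih =>
    have w := window_lower k a a (y + a.choose 2) le_rfl (Nat.le_add_left _ _)
    have hpas : (a + 1).choose (k + 3) = a.choose (k + 2) + a.choose (k + 3) :=
      Nat.choose_succ_succ' a (k + 2)
    have hT : y + (a + 1).choose 2 = y + a.choose 2 + a := by rw [T_succ]; omega
    rw [hT]
    omega

/-- Superadditivity of the colex clique count `fC`. -/
lemma fC_superadd (k x y : ℕ) :
    fC (k + 3) x + fC (k + 3) y ≤ fC (k + 3) (x + y) := by
  obtain ⟨a, e, ha1, hea, rfl⟩ := exists_rep x
  have hfx : fC (k + 3) (a.choose 2 + e) = a.choose (k + 3) + e.choose (k + 2) :=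
    fC_block ha1 (by omega)
  have i1 := add_block k a y
  have w := window_lower k a e (y + a.choose 2) (by omega) (Nat.le_add_left _ _)
  have hxy : a.choose 2 + e + y = y + a.choose 2 + e := by omega
  rw [hfx, hxy]
  omega

end GValAux

namespace GValAux

/-- Upper bound: a window of length `ℓ ≤ r` inside `[0, C(r+1,2))` has weight at most
that of the top window of length `ℓ`. -/
lemma window_upper (k : ℕ) : ∀ r ℓ z : ℕ, ℓ ≤ r → z + ℓ ≤ (r + 1).choose 2 →
    fC (k + 3) (z + ℓ) + (r - ℓ).choose (k + 2) ≤ fC (k + 3) z + r.choose (k + 2) := by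
  intro r
  induction r with
  | zero =>
    intro ℓ z hℓ hzl
    interval_cases ℓ
    simp at hzl ⊢
  | succ r ih =>
    intro ℓ z hℓ hzl
    have hT2 : (r + 1 + 1).choose 2 = (r + 1).choose 2 + (r + 1) := T_succ (r + 1)
    by_cases hz : (r + 1).choose 2 ≤ z
    · -- window entirely inside the top block
      set d0 := z - (r + 1).choose 2 with hd0
      have hz' : z = (r + 1).choose 2 + d0 := by omega
      have hd0l : d0 + ℓ ≤ r + 1 := by omega
      have hfz : fC (k + 3) z = (r + 1).choose (k + 3) + d0.choose (k + 2) := by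
        rw [hz']; exact fC_block (by omega) (by omega)
      have hfzl : fC (k + 3) (z + ℓ) = (r + 1).choose (k + 3) + (d0 + ℓ).choose (k + 2) := by
        rw [hz', Nat.add_assoc]; exact fC_block (by omega) (by omega)
      have hcc : (d0 + ℓ).choose (k + 2) + (r + 1 - ℓ).choose (k + 2)
          ≤ d0.choose (k + 2) + (r + 1 - ℓ + ℓ).choose (k + 2) :=
        choose_convex (k + 1) ℓ (by omega)
      have h2 : r + 1 - ℓ + ℓ = r + 1 := by omega
      rw [h2] at hcc
      omega
    · push_neg at hz
      by_cases hb : z + ℓ ≤ (r + 1).choose 2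
      · rcases le_or_gt ℓ r with h | h
        · -- strictly below: use the induction hypothesis plus Pascal
          have h1 := ih ℓ z h hb
          have h2 : (r + 1 - ℓ) = (r - ℓ) + 1 := by omega
          have h3 : ((r - ℓ) + 1).choose (k + 2)
              = (r - ℓ).choose (k + 1) + (r - ℓ).choose (k + 2) :=
            Nat.choose_succ_succ' (r - ℓ) (k + 1)
          have h4 : (r + 1).choose (k + 2) = r.choose (k + 1) + r.choose (k + 2) :=
            Nat.choose_succ_succ' r (k + 1)
          have h5 : (r - ℓ).choose (k + 1) ≤ r.choose (k + 1) :=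
            Nat.choose_le_choose _ (by omega)
          rw [h2, h3, h4]
          omega
        · -- ℓ = r + 1 : peel off one step and use IH with length r
          have hℓr : ℓ = r + 1 := by omega
          subst hℓr
          -- single step at z
          obtain ⟨c, d0, hc1, hd0, hzrep⟩ := exists_rep z
          have hcr : c ≤ r := by
            by_contra hcc
            push_neg at hcc
            have : (r + 1).choose 2 ≤ c.choose 2 := Nat.choose_le_choose 2 (by omega)
            omega
          have hstep : fC (k + 3) (z + 1)
              = fC (k + 3) z + d0.choose (k + 1) := by
            have e1 : fC (k + 3) z = c.choose (k + 3) + d0.choose (k + 2) := by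
              rw [hzrep]; exact fC_block hc1 (by omega)
            have e2 : fC (k + 3) (z + 1) = c.choose (k + 3) + (d0 + 1).choose (k + 2) := by
              rw [hzrep, Nat.add_assoc]; exact fC_block hc1 (by omega)
            have e3 : (d0 + 1).choose (k + 2) = d0.choose (k + 1) + d0.choose (k + 2) :=
              Nat.choose_succ_succ' d0 (k + 1)
            omega
          have hih := ih r (z + 1) le_rfl (by omega)
          have h6 : z + 1 + r = z + (r + 1) := by omega
          rw [h6] at hih
          have h7 : d0.choose (k + 1) ≤ r.choose (k + 1) :=
            Nat.choose_le_choose _ (by omega)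
          have h4 : (r + 1).choose (k + 2) = r.choose (k + 1) + r.choose (k + 2) :=
            Nat.choose_succ_succ' r (k + 1)
          have h8 : (r + 1 - (r + 1)) = 0 := by omega
          have h9 : (r - r) = 0 := by omega
          rw [h8]
          rw [h9] at hih
          omega
      · -- window crosses the top block boundary
        push_neg at hb
        set γ := (r + 1).choose 2 - z with hγ
        set v := z + ℓ - (r + 1).choose 2 with hv
        have hγ1 : 1 ≤ γ := by omega
        have hv1 : 1 ≤ v := by omega
        have hγv : γ + v = ℓ := by omega
        have hvr : v ≤ r + 1 := by omega
        have hγr : γ ≤ r := by omega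
        have hfzl : fC (k + 3) (z + ℓ) = (r + 1).choose (k + 3) + v.choose (k + 2) := by
          rw [show z + ℓ = (r + 1).choose 2 + v by omega]
          exact fC_block (by omega) (by omega)
        have hih := ih γ z hγr (by omega)
        rw [show z + γ = (r + 1).choose 2 by omega] at hih
        have hfq : fC (k + 3) ((r + 1).choose 2) = (r + 1).choose (k + 3) := by
          rw [show (r + 1).choose 2 = (r + 1).choose 2 + 0 by omega]
          rw [fC_block (by omega) (by omega)]
          simp
        have hA : (0 + v).choose (k + 2) + (r + 1 - ℓ).choose (k + 2)
            ≤ (0 : ℕ).choose (k + 2) + (r + 1 - ℓ + v).choose (k + 2) :=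
          choose_convex (k + 1) v (Nat.zero_le _)
        simp only [Nat.zero_add, Nat.choose_zero_succ] at hA
        have hB : r + 1 - ℓ + v = (r - γ) + 1 := by omega
        rw [hB] at hA
        have hC : ((r - γ) + 1).choose (k + 2)
            = (r - γ).choose (k + 1) + (r - γ).choose (k + 2) :=
          Nat.choose_succ_succ' (r - γ) (k + 1)
        have hD : (r - γ).choose (k + 1) ≤ r.choose (k + 1) :=
          Nat.choose_le_choose _ (by omega)
        have h4 : (r + 1).choose (k + 2) = r.choose (k + 1) + r.choose (k + 2) :=
          Nat.choose_succ_succ' r (k + 1)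
        omega

end GValAux

namespace GValAux

/-- Wrap-around superadditivity at a complete block. -/
lemma fC_S2 (k : ℕ) : ∀ r x y : ℕ, x ≤ y → y ≤ (r + 1).choose 2 → (r + 1).choose 2 ≤ x + y →
    fC (k + 3) x + fC (k + 3) y
      ≤ (r + 1).choose (k + 3) + fC (k + 3) (x + y - (r + 1).choose 2) := by
  intro r
  induction r with
  | zero =>
    intro x y hxy hyq hqxy
    have h0 : (1 : ℕ).choose 2 = 0 := by decide
    rw [h0] at hyq hqxy ⊢
    interval_cases y
    interval_cases x
    have h1 : fC (k + 3) 0 = 0 := by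
      rw [show (0 : ℕ) = Nat.choose 1 2 + 0 by decide, fC_block le_rfl (Nat.zero_le 1)]
      simp [Nat.choose_eq_zero_of_lt]
    simp [h1]
  | succ r ih =>
    intro x y hxy hyq hqxy
    have hT2 : (r + 1 + 1).choose 2 = (r + 1).choose 2 + (r + 1) := T_succ (r + 1)
    have hfq : fC (k + 3) ((r + 1 + 1).choose 2) = (r + 1 + 1).choose (k + 3) := by
      rw [show (r + 1 + 1).choose 2 = (r + 1 + 1).choose 2 + 0 by omega]
      rw [fC_block (by omega) (by omega)]
      simp
    have hpas : (r + 1 + 1).choose (k + 3) = (r + 1).choose (k + 2) + (r + 1).choose (k + 3) :=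
      Nat.choose_succ_succ' (r + 1) (k + 2)
    rcases eq_or_lt_of_le hyq with hyq' | hyq'
    · -- y is the complete block
      rw [hyq', hfq]
      rw [show x + (r + 1 + 1).choose 2 - (r + 1 + 1).choose 2 = x by omega]
      omega
    by_cases hy' : y ≤ (r + 1).choose 2
    · -- move a full block of r+1 edges from x to complete the top block
      have hx : r + 1 ≤ x := by omega
      have hw := window_upper k (r + 1) (r + 1) (x - (r + 1)) le_rfl (by omega)
      rw [show x - (r + 1) + (r + 1) = x by omega] at hw
      rw [show r + 1 - (r + 1) = 0 by omega] at hw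
      have hih := ih (x - (r + 1)) y (by omega) hy' (by omega)
      rw [show x - (r + 1) + y - (r + 1).choose 2 = x + y - (r + 1 + 1).choose 2 by omega] at hih
      simp only [Nat.choose_zero_succ] at hw
      omega
    · -- y lies inside the top block
      push_neg at hy'
      set e := y - (r + 1).choose 2 with he
      have he1 : 1 ≤ e := by omega
      have her : e ≤ r + 1 := by omega
      have hfy : fC (k + 3) y = (r + 1).choose (k + 3) + e.choose (k + 2) := by
        rw [show y = (r + 1).choose 2 + e by omega]
        exact fC_block (by omega) (by omega)
      set L := r + 1 - e with hL
      have hxL : L ≤ x := by omega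
      have hw := window_upper k (r + 1) L (x - L) (by omega) (by omega)
      rw [show x - L + L = x by omega] at hw
      rw [show r + 1 - L = e by omega] at hw
      rw [show x + y - (r + 1 + 1).choose 2 = x - L by omega]
      omega

end GValAux

namespace GValAux

lemma fC_S2' (k r x y : ℕ) (hyq : y ≤ (r + 1).choose 2) (hxq : x ≤ (r + 1).choose 2)
    (hqxy : (r + 1).choose 2 ≤ x + y) :
    fC (k + 3) x + fC (k + 3) y
      ≤ (r + 1).choose (k + 3) + fC (k + 3) (x + y - (r + 1).choose 2) := by
  rcases le_total x y with h | h
  · exact fC_S2 k r x y h hyq hqxy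
  · have := fC_S2 k r y x h hxq (by omega)
    rw [show y + x = x + y by omega] at this
    omega

/-- Superadditivity of `gVal` in the number of edges. -/
lemma gVal_superadd (t r m1 m2 : ℕ) (ht : 3 ≤ t) (hr : 1 ≤ r) :
    gVal t r m1 + gVal t r m2 ≤ gVal t r (m1 + m2) := by
  obtain ⟨k, rfl⟩ : ∃ k, t = k + 3 := ⟨t - 3, by omega⟩
  have hq1 : 1 ≤ (r + 1).choose 2 := by
    have h1 : (2 : ℕ).choose 2 ≤ (r + 1).choose 2 := Nat.choose_le_choose 2 (by omega)
    simpa using h1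
  set q := (r + 1).choose 2 with hq
  rw [gVal_eq, gVal_eq, gVal_eq]
  have hd1 := Nat.div_add_mod m1 q
  have hd2 := Nat.div_add_mod m2 q
  have hb1 : m1 % q < q := Nat.mod_lt _ (by omega)
  have hb2 : m2 % q < q := Nat.mod_lt _ (by omega)
  set a1 := m1 / q
  set b1 := m1 % q
  set a2 := m2 / q
  set b2 := m2 % q
  have hc1 : q * a1 = a1 * q := Nat.mul_comm _ _
  have hc2 : q * a2 = a2 * q := Nat.mul_comm _ _
  rcases lt_or_ge (b1 + b2) q with hlt | hge
  · have hsum : m1 + m2 = b1 + b2 + (a1 + a2) * q := by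
      have h : (a1 + a2) * q = a1 * q + a2 * q := Nat.add_mul _ _ _
      omega
    have hdiv : (m1 + m2) / q = a1 + a2 := by
      rw [hsum, Nat.add_mul_div_right _ _ (by omega : 0 < q), Nat.div_eq_of_lt hlt]
      omega
    have hmod : (m1 + m2) % q = b1 + b2 := by
      rw [hsum, Nat.add_mul_mod_self_right, Nat.mod_eq_of_lt hlt]
    rw [hdiv, hmod]
    have hS1 := fC_superadd k b1 b2
    rw [Nat.add_mul]
    omega
  · have hsum : m1 + m2 = (b1 + b2 - q) + (a1 + a2 + 1) * q := by
      have h : (a1 + a2 + 1) * q = a1 * q + a2 * q + q := by ring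
      omega
    have hdiv : (m1 + m2) / q = a1 + a2 + 1 := by
      rw [hsum, Nat.add_mul_div_right _ _ (by omega : 0 < q),
        Nat.div_eq_of_lt (by omega : b1 + b2 - q < q)]
      omega
    have hmod : (m1 + m2) % q = b1 + b2 - q := by
      rw [hsum, Nat.add_mul_mod_self_right, Nat.mod_eq_of_lt (by omega : b1 + b2 - q < q)]
    rw [hdiv, hmod]
    have hS2 := fC_S2' k r b1 b2 (by omega) (by omega) (by omega)
    rw [Nat.add_mul, Nat.add_mul]
    rw [← hq] at hS2
    omega

end GValAux

namespace GValAux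
variable {V : Type} [Fintype V] [DecidableEq V]

lemma exists_finCopy (G : SimpleGraph V) :
    ∃ H : SimpleGraph (Fin (Fintype.card V)),
      H.edgeFinset.card = G.edgeFinset.card ∧
      (∀ i, ∃ v, H.degree i = G.degree v) ∧
      ∀ t, (H.cliqueFinset t).card = (G.cliqueFinset t).card := by
  set e := Fintype.equivFin V with he
  refine ⟨G.comap ⇑e.symm, ?_, ?_, ?_⟩
  · -- edge count
    refine Finset.card_nbij' (Sym2.map ⇑e.symm) (Sym2.map ⇑e) ?_ ?_ ?_ ?_
    · intro s hs
      induction s using Sym2.ind with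
      | _ i j =>
        simp only [Finset.mem_coe, SimpleGraph.mem_edgeFinset, SimpleGraph.mem_edgeSet, Sym2.map_pair_eq] at hs ⊢
        exact hs
    · intro s hs
      induction s using Sym2.ind with
      | _ u v =>
        simp only [Finset.mem_coe, SimpleGraph.mem_edgeFinset, SimpleGraph.mem_edgeSet, Sym2.map_pair_eq,
          SimpleGraph.comap_adj, Equiv.symm_apply_apply] at hs ⊢
        exact hs
    · intro s hs
      induction s using Sym2.ind with
      | _ i j => simp
    · intro s hs
      induction s using Sym2.ind with
      | _ u v => simp
  · -- degrees
    intro i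
    refine ⟨e.symm i, ?_⟩
    rw [← SimpleGraph.card_neighborFinset_eq_degree, ← SimpleGraph.card_neighborFinset_eq_degree]
    refine Finset.card_nbij' (⇑e.symm) (⇑e) ?_ ?_ ?_ ?_
    · intro v hv
      simp only [Finset.mem_coe, SimpleGraph.mem_neighborFinset] at hv ⊢
      exact hv
    · intro v hv
      simp only [Finset.mem_coe, SimpleGraph.mem_neighborFinset, SimpleGraph.comap_adj,
        Equiv.symm_apply_apply] at hv ⊢
      exact hv
    · intro v _; simp
    · intro v _; simp
  · -- cliques
    intro t
    refine Finset.card_nbij' (fun S => S.image ⇑e.symm) (fun S => S.image ⇑e) ?_ ?_ ?_ ?_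
    · intro S hS
      simp only [Finset.mem_coe, SimpleGraph.mem_cliqueFinset_iff, SimpleGraph.isNClique_iff] at hS ⊢
      obtain ⟨hclique, hcard⟩ := hS
      refine ⟨?_, by rw [Finset.card_image_of_injective _ e.symm.injective]; exact hcard⟩
      intro x hx y hy hxy
      simp only [Finset.coe_image, Set.mem_image, Finset.mem_coe] at hx hy
      obtain ⟨i, hi, rfl⟩ := hx
      obtain ⟨j, hj, rfl⟩ := hy
      have hij : i ≠ j := fun h => hxy (by rw [h])
      exact hclique hi hj hij
    · intro S hS
      simp only [Finset.mem_coe, SimpleGraph.mem_cliqueFinset_iff, SimpleGraph.isNClique_iff] at hS ⊢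
      obtain ⟨hclique, hcard⟩ := hS
      refine ⟨?_, by rw [Finset.card_image_of_injective _ e.injective]; exact hcard⟩
      intro x hx y hy hxy
      simp only [Finset.coe_image, Set.mem_image, Finset.mem_coe] at hx hy
      obtain ⟨i, hi, rfl⟩ := hx
      obtain ⟨j, hj, rfl⟩ := hy
      have hij : i ≠ j := fun h => hxy (by rw [h])
      have := hclique hi hj hij
      simpa using this
    · intro S _
      simp [Finset.image_image]
    · intro S _
      simp [Finset.image_image]

end GValAux

namespace GValAux

/-- instance-robust bound for one part. -/
lemma part_bound {V : Type} [Fintype V] [DecidableEq V] {t r m : ℕ}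
    (ih : ∀ (n : ℕ) (H : SimpleGraph (Fin n)),
      H.edgeFinset.card < m → H.maxDegree ≤ r →
      (H.cliqueFinset t).card ≤ gVal t r H.edgeFinset.card)
    (G' : SimpleGraph V) (C : Finset (Sym2 V))
    (hedge : ∀ x, x ∈ G'.edgeSet ↔ x ∈ C) (hC : C.card < m)
    (hdeg : ∀ (v : V) (N : Finset V), (∀ u, u ∈ N ↔ G'.Adj v u) → N.card ≤ r)
    (F : Finset (Finset V)) (hF : ∀ S, S ∈ F ↔ G'.IsNClique t S) :
    F.card ≤ gVal t r C.card := by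
  have hFeq : F = G'.cliqueFinset t := by
    ext S
    rw [hF, SimpleGraph.mem_cliqueFinset_iff]
  have hCeq : G'.edgeFinset = C := by
    ext x
    rw [SimpleGraph.mem_edgeFinset]
    exact hedge x
  have hdeg' : ∀ v, G'.degree v ≤ r := by
    intro v
    apply hdeg v (G'.neighborFinset v)
    intro u
    exact SimpleGraph.mem_neighborFinset _ _ _
  obtain ⟨H, hHe, hHdeg, hHcl⟩ := exists_finCopy G'
  have hmax : H.maxDegree ≤ r := by
    apply SimpleGraph.maxDegree_le_of_forall_degree_le
    intro i
    obtain ⟨v, hv⟩ := hHdeg i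
    rw [hv]
    exact hdeg' v
  have := ih _ H (by rw [hHe, hCeq]; exact hC) hmax
  rw [hHe, hHcl, hCeq] at this
  rw [hFeq]
  exact this

end GValAux

open GValAux

/-- If the conjecture `k_t(H) ≤ g_t(e(H), r)` holds for all graphs of maximum degree at most `r`
with fewer than `m` edges, and `G` is a graph with `m` edges and maximum degree at most `r`
which is not connected (its edge set splits into two nonempty parts sharing no vertex), then
`k_t(G) ≤ g_t(m, r)`. -/
theorem disconnected_case {V : Type} [Fintype V] [DecidableEq V]
    (t r m : ℕ) (ht : 3 ≤ t) (hr : 1 ≤ r) (hm : 1 ≤ m)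
    (ih : ∀ (n : ℕ) (H : SimpleGraph (Fin n)),
      H.edgeFinset.card < m → H.maxDegree ≤ r →
      (H.cliqueFinset t).card ≤ gVal t r H.edgeFinset.card)
    (G : SimpleGraph V)
    (hGm : G.edgeFinset.card = m) (hΔ : G.maxDegree ≤ r)
    (hdisc : ∃ A B : Finset (Sym2 V), G.edgeFinset = A ∪ B ∧ A.Nonempty ∧ B.Nonempty ∧
      ∀ e ∈ A, ∀ f ∈ B, ∀ v : V, v ∈ e → v ∉ f) :
    (G.cliqueFinset t).card ≤ gVal t r m := by
  obtain ⟨A, B, hABu, hA, hB, hsep⟩ := hdisc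
  have hAsub : A ⊆ G.edgeFinset := hABu ▸ Finset.subset_union_left
  have hBsub : B ⊆ G.edgeFinset := hABu ▸ Finset.subset_union_right
  have hdisj : Disjoint A B := by
    rw [Finset.disjoint_left]
    intro s hsA hsB
    induction s using Sym2.ind with
    | _ x y => exact hsep _ hsA _ hsB x (Sym2.mem_mk_left x y) (Sym2.mem_mk_left x y)
  -- the two edge-parts as graphs
  let GA : SimpleGraph V :=
    { Adj := fun u v => G.Adj u v ∧ s(u, v) ∈ A
      symm := by
        constructor
        intro u v h
        obtain ⟨h1, h2⟩ := h
        exact ⟨h1.symm, by rwa [Sym2.eq_swap]⟩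
      loopless := ⟨fun v h => G.loopless.irrefl v h.1⟩ }
  let GB : SimpleGraph V :=
    { Adj := fun u v => G.Adj u v ∧ s(u, v) ∈ B
      symm := by
        constructor
        intro u v h
        obtain ⟨h1, h2⟩ := h
        exact ⟨h1.symm, by rwa [Sym2.eq_swap]⟩
      loopless := ⟨fun v h => G.loopless.irrefl v h.1⟩ }
  have hGAadj : ∀ u v, GA.Adj u v ↔ G.Adj u v ∧ s(u, v) ∈ A := fun _ _ => Iff.rfl
  have hGBadj : ∀ u v, GB.Adj u v ↔ G.Adj u v ∧ s(u, v) ∈ B := fun _ _ => Iff.rfl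
  have hcardAB : A.card + B.card = m := by
    rw [← hGm, hABu, Finset.card_union_of_disjoint hdisj]
  have hAm : A.card < m := by
    have := Finset.card_pos.mpr hB
    omega
  have hBm : B.card < m := by
    have := Finset.card_pos.mpr hA
    omega
  have hedgeA : ∀ x, x ∈ GA.edgeSet ↔ x ∈ A := by
    intro x
    induction x using Sym2.ind with
    | _ u v =>
      rw [SimpleGraph.mem_edgeSet]
      constructor
      · exact fun h => h.2
      · intro h
        exact ⟨(SimpleGraph.mem_edgeSet G).mp (SimpleGraph.mem_edgeFinset.mp (hAsub h)), h⟩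
  have hedgeB : ∀ x, x ∈ GB.edgeSet ↔ x ∈ B := by
    intro x
    induction x using Sym2.ind with
    | _ u v =>
      rw [SimpleGraph.mem_edgeSet]
      constructor
      · exact fun h => h.2
      · intro h
        exact ⟨(SimpleGraph.mem_edgeSet G).mp (SimpleGraph.mem_edgeFinset.mp (hBsub h)), h⟩
  have hdegG : ∀ (G' : SimpleGraph V), (∀ u v, G'.Adj u v → G.Adj u v) →
      ∀ (v : V) (N : Finset V), (∀ u, u ∈ N ↔ G'.Adj v u) → N.card ≤ r := by
    intro G' hle v N hN
    have h1 : N ⊆ G.neighborFinset v := by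
      intro u hu
      rw [SimpleGraph.mem_neighborFinset]
      exact hle v u ((hN u).mp hu)
    calc N.card ≤ (G.neighborFinset v).card := Finset.card_le_card h1
      _ = G.degree v := G.card_neighborFinset_eq_degree v
      _ ≤ G.maxDegree := G.degree_le_maxDegree v
      _ ≤ r := hΔ
  have hclA : (GA.cliqueFinset t).card ≤ gVal t r A.card :=
    part_bound ih GA A hedgeA hAm (hdegG GA fun u v h => h.1)
      (GA.cliqueFinset t) (fun S => SimpleGraph.mem_cliqueFinset_iff)
  have hclB : (GB.cliqueFinset t).card ≤ gVal t r B.card :=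
    part_bound ih GB B hedgeB hBm (hdegG GB fun u v h => h.1)
      (GB.cliqueFinset t) (fun S => SimpleGraph.mem_cliqueFinset_iff)
  -- every t-clique of G is a clique of one of the parts
  have hsplit : G.cliqueFinset t ⊆ GA.cliqueFinset t ∪ GB.cliqueFinset t := by
    intro S hS
    rw [SimpleGraph.mem_cliqueFinset_iff, SimpleGraph.isNClique_iff] at hS
    obtain ⟨hcl, hcard⟩ := hS
    have hedge : ∀ x ∈ S, ∀ y ∈ S, x ≠ y → s(x, y) ∈ A ∪ B := by
      intro x hx y hy hxy
      rw [← hABu, SimpleGraph.mem_edgeFinset, SimpleGraph.mem_edgeSet]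
      exact hcl hx hy hxy
    by_cases hallA : ∀ x ∈ S, ∀ y ∈ S, x ≠ y → s(x, y) ∈ A
    · apply Finset.mem_union_left
      rw [SimpleGraph.mem_cliqueFinset_iff, SimpleGraph.isNClique_iff]
      exact ⟨fun x hx y hy hxy => ⟨hcl hx hy hxy, hallA x hx y hy hxy⟩, hcard⟩
    · push_neg at hallA
      obtain ⟨u, hu, v, hv, huv, hnA⟩ := hallA
      have huvB : s(u, v) ∈ B := by
        have := hedge u hu v hv huv
        rw [Finset.mem_union] at this
        tauto
      apply Finset.mem_union_right
      rw [SimpleGraph.mem_cliqueFinset_iff, SimpleGraph.isNClique_iff]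
      refine ⟨fun x hx y hy hxy => ⟨hcl hx hy hxy, ?_⟩, hcard⟩
      by_contra hxyB
      have hxyA : s(x, y) ∈ A := by
        have := hedge x hx y hy hxy
        rw [Finset.mem_union] at this
        tauto
      have hxnot : x ∉ s(u, v) := hsep _ hxyA _ huvB x (Sym2.mem_mk_left x y)
      have hxu : x ≠ u := fun h => hxnot (h ▸ Sym2.mem_mk_left u v)
      have hxS : x ∈ S := hx
      have huS : u ∈ S := hu
      have hxuedge := hedge x hxS u huS hxu
      rw [Finset.mem_union] at hxuedge
      rcases hxuedge with h | h
      · exact hsep _ h _ huvB u (Sym2.mem_mk_right x u) (Sym2.mem_mk_left u v)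
      · exact hsep _ hxyA _ h x (Sym2.mem_mk_left x y) (Sym2.mem_mk_left x u)
  have hdisjcl : Disjoint (GA.cliqueFinset t) (GB.cliqueFinset t) := by
    rw [Finset.disjoint_left]
    intro S hSA hSB
    rw [SimpleGraph.mem_cliqueFinset_iff, SimpleGraph.isNClique_iff] at hSA hSB
    obtain ⟨hclA', hcard⟩ := hSA
    obtain ⟨hclB', -⟩ := hSB
    have h2 : 1 < S.card := by omega
    rw [Finset.one_lt_card] at h2
    obtain ⟨u, hu, v, hv, huv⟩ := h2
    exact hsep _ (hclA' hu hv huv).2 _ (hclB' hu hv huv).2 u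
      (Sym2.mem_mk_left _ _) (Sym2.mem_mk_left _ _)
  calc (G.cliqueFinset t).card
      ≤ (GA.cliqueFinset t ∪ GB.cliqueFinset t).card := Finset.card_le_card hsplit
    _ = (GA.cliqueFinset t).card + (GB.cliqueFinset t).card :=
        Finset.card_union_of_disjoint hdisjcl
    _ ≤ gVal t r A.card + gVal t r B.card := Nat.add_le_add hclA hclB
    _ ≤ gVal t r (A.card + B.card) := gVal_superadd t r _ _ ht hr
    _ = gVal t r m := by rw [hcardAB]
end

section
/- Let G be a finite simple graph with maximum degree at most r, let T be a cluster of G, and let xy be a blue edge of G with respect to T, where x ∈ S_T. Then the weight of xy satisfies w(xy) = |N(x) ∩ N(y)| ≤ s − 2, where s = |S_T|; that is, the edge xy lies in at most s − 2 triangles of G. -/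
open scoped Classical
open Finset

variable {V : Type} [Fintype V] [DecidableEq V]

/-- A tight clique for the parameter `r`: a complete subgraph `T` all of whose edges `xy` are
tight, i.e. have weight `w(xy) = |N(x) ∩ N(y)| = r − 1`. -/
def IsTightClique (G : SimpleGraph V) (r : ℕ) (T : Finset V) : Prop :=
  G.IsClique ↑T ∧ ∀ x ∈ T, ∀ y ∈ T, x ≠ y →
    (G.neighborFinset x ∩ G.neighborFinset y).card = r - 1

/-- A cluster: a maximal tight clique. -/
def IsCluster (G : SimpleGraph V) (r : ℕ) (T : Finset V) : Prop :=
  IsTightClique G r T ∧ ∀ T' : Finset V, IsTightClique G r T' → T ⊆ T' → T' = T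

/-- `S_T = ⋂_{v ∈ T} N(v)`, the set of common neighbors of the vertices of `T`. -/
noncomputable def commonNbrs (G : SimpleGraph V) (T : Finset V) : Finset V :=
  Finset.univ.filter fun u => ∀ v ∈ T, G.Adj v u

/-- The red graph `R_T`: the complement of the induced subgraph `G[S]` (for `S = S_T`), viewed
as the graph on `V` whose edges are the non-adjacent pairs of distinct vertices of `S`. -/
def redGraph (G : SimpleGraph V) (S : Finset V) : SimpleGraph V where
  Adj u v := u ∈ S ∧ v ∈ S ∧ u ≠ v ∧ ¬G.Adj u v
  symm := by
    constructor
    intro u v h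
    exact ⟨h.2.1, h.1, h.2.2.1.symm, fun h' => h.2.2.2 h'.symm⟩
  loopless := by
    constructor
    intro u h
    exact h.2.2.1 rfl

/-- A blue edge: an edge of `G` with one endpoint in `S_T` and the other outside `T ∪ S_T`. -/
def IsBlueEdge (G : SimpleGraph V) (T : Finset V) (u v : V) : Prop :=
  G.Adj u v ∧ ((u ∈ commonNbrs G T ∧ v ∉ T ∪ commonNbrs G T) ∨
    (v ∈ commonNbrs G T ∧ u ∉ T ∪ commonNbrs G T))

/-- The graph `B_T` of blue edges. -/
def blueGraph (G : SimpleGraph V) (T : Finset V) : SimpleGraph V where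
  Adj u v := IsBlueEdge G T u v
  symm := by
    constructor
    intro u v h
    exact ⟨h.1.symm, h.2.symm⟩
  loopless := ⟨fun u h => G.irrefl h.1⟩

/-- The folding `G_T` of `G` at the cluster `T`: add all missing pairs inside `S_T` (so that
`T ∪ S_T` induces a complete graph) and delete all blue edges. -/
def folding (G : SimpleGraph V) (T : Finset V) : SimpleGraph V where
  Adj u v := u ≠ v ∧ (G.Adj u v ∨ (u ∈ commonNbrs G T ∧ v ∈ commonNbrs G T)) ∧
    ¬IsBlueEdge G T u v
  symm := by
    constructor
    intro u v h
    obtain ⟨h1, h2, h3⟩ := h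
    refine ⟨h1.symm, ?_, ?_⟩
    · rcases h2 with h | h
      · exact Or.inl h.symm
      · exact Or.inr ⟨h.2, h.1⟩
    · intro hb
      exact h3 ⟨hb.1.symm, hb.2.symm⟩
  loopless := ⟨fun u h => h.1 rfl⟩

/-- Each blue edge has weight at most `s − 2`: if `T` is a cluster of a graph `G` with maximum
degree at most `r`, `x ∈ S_T`, `y ∉ T ∪ S_T` and `xy` is an edge (i.e. a blue edge), then
`w(xy) = |N(x) ∩ N(y)| ≤ |S_T| − 2`, i.e. `xy` lies in at most `s − 2` triangles of `G`. -/
theorem blue_edge_weight_le {V : Type} [Fintype V] [DecidableEq V]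
    (G : SimpleGraph V) (r : ℕ) (hΔ : G.maxDegree ≤ r)
    (T : Finset V) (hT : IsCluster G r T)
    (hTS : T.card + (commonNbrs G T).card = r + 1)
    (x y : V) (hx : x ∈ commonNbrs G T) (hy : y ∉ T ∪ commonNbrs G T)
    (hadj : G.Adj x y) :
    ((G.neighborFinset x ∩ G.neighborFinset y).card : ℤ)
      ≤ ((commonNbrs G T).card : ℤ) - 2 := by
  classical
  set S := commonNbrs G T with hS
  have hmemS : ∀ u ∈ S, ∀ v ∈ T, G.Adj v u := by
    intro u hu
    simpa [hS, commonNbrs] using hu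
  have hST : ∀ u ∈ S, u ∉ T := by
    intro u hu huT
    exact G.irrefl (hmemS u hu u huT)
  have hyT : y ∉ T := fun h => hy (Finset.mem_union_left _ h)
  have hyS : y ∉ S := fun h => hy (Finset.mem_union_right _ h)
  -- Each z ∈ T has neighborhood exactly (T \ {z}) ∪ S.
  have hnbr : ∀ z ∈ T, G.neighborFinset z = T.erase z ∪ S := by
    intro z hz
    have hsub : T.erase z ∪ S ⊆ G.neighborFinset z := by
      intro w hw
      rw [SimpleGraph.mem_neighborFinset]
      rcases Finset.mem_union.1 hw with h | h
      · exact hT.1.1 (Finset.mem_coe.2 hz) (Finset.mem_coe.2 (Finset.mem_of_mem_erase h))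
          (Finset.ne_of_mem_erase h).symm
      · exact hmemS w h z hz
    have hdisj : Disjoint (T.erase z) S := by
      refine Finset.disjoint_left.2 ?_
      intro a ha haS
      exact hST a haS (Finset.mem_of_mem_erase ha)
    have hcard1 : 1 ≤ T.card := Finset.card_pos.2 ⟨z, hz⟩
    have hcard : (T.erase z ∪ S).card = r := by
      rw [Finset.card_union_of_disjoint hdisj, Finset.card_erase_of_mem hz]
      omega
    have hdeg : (G.neighborFinset z).card ≤ r := by
      rw [G.card_neighborFinset_eq_degree]
      exact le_trans (G.degree_le_maxDegree z) hΔ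
    exact (Finset.eq_of_subset_of_card_le hsub (by rw [hcard]; exact hdeg)).symm
  have hsub : insert y T ⊆ G.neighborFinset x := by
    intro w hw
    rw [SimpleGraph.mem_neighborFinset]
    rcases Finset.mem_insert.1 hw with rfl | h
    · exact hadj
    · exact (hmemS x hx w h).symm
  have hsub2 : G.neighborFinset x ∩ G.neighborFinset y ⊆
      G.neighborFinset x \ insert y T := by
    intro z hz
    have hz1 := Finset.mem_inter.1 hz
    rw [Finset.mem_sdiff]
    refine ⟨hz1.1, ?_⟩
    intro hmem
    rcases Finset.mem_insert.1 hmem with rfl | hzT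
    · exact G.irrefl ((SimpleGraph.mem_neighborFinset _ _ _).1 hz1.2)
    · have hyz : y ∈ G.neighborFinset z := by
        rw [SimpleGraph.mem_neighborFinset]
        exact ((SimpleGraph.mem_neighborFinset _ _ _).1 hz1.2).symm
      rw [hnbr z hzT] at hyz
      rcases Finset.mem_union.1 hyz with h | h
      · exact hyT (Finset.mem_of_mem_erase h)
      · exact hyS h
  have h1 : (G.neighborFinset x ∩ G.neighborFinset y).card ≤
      (G.neighborFinset x).card - (insert y T).card := by
    calc (G.neighborFinset x ∩ G.neighborFinset y).card
        ≤ (G.neighborFinset x \ insert y T).card := Finset.card_le_card hsub2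
      _ = (G.neighborFinset x).card - (insert y T).card := Finset.card_sdiff_of_subset hsub
  have hins : (insert y T).card = T.card + 1 := Finset.card_insert_of_notMem hyT
  have hle : (insert y T).card ≤ (G.neighborFinset x).card := Finset.card_le_card hsub
  have hdegx : (G.neighborFinset x).card ≤ r := by
    rw [G.card_neighborFinset_eq_degree]
    exact le_trans (G.degree_le_maxDegree x) hΔ
  omega
end

section
/- Let H be a finite simple graph and let B be a bipartite graph with bipartition (V(H), Y). Let x, y ∈ Y be non-adjacent vertices of B with N_B(x) ⊄ N_B(y) and N_B(y) ⊄ N_B(x). Then ψ_H(B) ≤ ψ_H(B_{x→y}) and d_2(B) < d_2(B_{x→y}). -/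
open scoped Classical
open Finset

/-- The compression `G_{x→y}` of a graph `G` from `x` to `y` (intended for non-adjacent `x, y`):
delete all edges between `x` and `N(x) ∖ N(y)` and add all edges from `y` to `N(x) ∖ N(y)`. -/
def compress {W : Type} (G : SimpleGraph W) (x y : W) : SimpleGraph W where
  Adj u v := u ≠ v ∧
    ((G.Adj u v ∧ ¬(u = x ∧ G.Adj x v ∧ ¬G.Adj y v) ∧ ¬(v = x ∧ G.Adj x u ∧ ¬G.Adj y u)) ∨
      (u = y ∧ G.Adj x v ∧ ¬G.Adj y v) ∨ (v = y ∧ G.Adj x u ∧ ¬G.Adj y u))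
  symm := by
    constructor
    intro u v h
    obtain ⟨hne, h⟩ := h
    refine ⟨hne.symm, ?_⟩
    rcases h with ⟨h1, h2, h3⟩ | h | h
    · exact Or.inl ⟨h1.symm, h3, h2⟩
    · exact Or.inr (Or.inr h)
    · exact Or.inr (Or.inl h)
  loopless := ⟨fun u h => h.1 rfl⟩

/-- `d₂(G) = Σ_v d(v)²`. -/
noncomputable def degSq {W : Type} [Fintype W] (G : SimpleGraph W) : ℕ :=
  ∑ v, (G.degree v) ^ 2

/-- For a graph `H` and a bipartite graph `B` with bipartition `(V(H), Y)`,
`ψ_H(B) = Σ_{v ∈ V(H)} C(d_B(v), 2) + Σ_{y ∈ Y} #{pairs {i,j} ⊆ V(H) : i ≠ j,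
iy, jy ∈ E(B), ij ∉ E(H)}`. -/
noncomputable def psi {V Y : Type} [Fintype V] [Fintype Y] [DecidableEq V]
    (H : SimpleGraph V) (B : SimpleGraph (V ⊕ Y)) : ℕ :=
  (∑ v : V, (B.degree (Sum.inl v)).choose 2) +
    ∑ y : Y, ((Finset.powersetCard 2 (Finset.univ : Finset V)).filter
      (fun p => (∀ i ∈ p, B.Adj (Sum.inr y) (Sum.inl i)) ∧
        ∀ i ∈ p, ∀ j ∈ p, i ≠ j → ¬H.Adj i j)).card

lemma compress_adj {W : Type} (G : SimpleGraph W) (x y u v : W) :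
    (compress G x y).Adj u v ↔ u ≠ v ∧
    ((G.Adj u v ∧ ¬(u = x ∧ G.Adj x v ∧ ¬G.Adj y v) ∧ ¬(v = x ∧ G.Adj x u ∧ ¬G.Adj y u)) ∨
      (u = y ∧ G.Adj x v ∧ ¬G.Adj y v) ∨ (v = y ∧ G.Adj x u ∧ ¬G.Adj y u)) := Iff.rfl

lemma sum_split_two {α : Type*} [Fintype α] [DecidableEq α] (f : α → ℕ) (a b : α)
    (hab : a ≠ b) :
    ∑ c, f c = f a + f b + ∑ c ∈ (Finset.univ.erase a).erase b, f c := by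
  rw [← Finset.add_sum_erase _ f (Finset.mem_univ a),
      ← Finset.add_sum_erase _ f (Finset.mem_erase.mpr ⟨hab.symm, Finset.mem_univ b⟩)]
  ring

section Adj
variable {V Y : Type} (B : SimpleGraph (V ⊕ Y)) (x y : Y)

lemma cadj_x (hxy' : x ≠ y) (w : V ⊕ Y) :
    (compress B (Sum.inr x) (Sum.inr y)).Adj (Sum.inr x) w ↔
      B.Adj (Sum.inr x) w ∧ B.Adj (Sum.inr y) w := by
  rw [compress_adj]
  constructor
  · rintro ⟨hne, (⟨h1, h2, h3⟩ | ⟨h1, h2, h3⟩ | ⟨h1, h2, h3⟩)⟩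
    · refine ⟨h1, ?_⟩
      by_contra hy
      exact h2 ⟨rfl, h1, hy⟩
    · exact absurd (Sum.inr.inj h1) hxy'
    · exact absurd h2 (B.loopless.irrefl _)
  · rintro ⟨h1, h2⟩
    exact ⟨h1.ne, Or.inl ⟨h1, fun h => h.2.2 h2, fun h => B.loopless.irrefl _ h.2.1⟩⟩

lemma cadj_y (hbipR : ∀ a b : Y, ¬B.Adj (Sum.inr a) (Sum.inr b)) (hxy' : x ≠ y) (w : V ⊕ Y) :
    (compress B (Sum.inr x) (Sum.inr y)).Adj (Sum.inr y) w ↔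
      B.Adj (Sum.inr x) w ∨ B.Adj (Sum.inr y) w := by
  have hAxy : ¬B.Adj (Sum.inr x) (Sum.inr y) := hbipR x y
  rw [compress_adj]
  constructor
  · rintro ⟨hne, (⟨h1, h2, h3⟩ | ⟨h1, h2, h3⟩ | ⟨h1, h2, h3⟩)⟩
    · exact Or.inr h1
    · exact Or.inl h2
    · exact absurd h2 (fun h => hAxy h)
  · intro h
    by_cases hyw : B.Adj (Sum.inr y) w
    · refine ⟨hyw.ne, Or.inl ⟨hyw, ?_, ?_⟩⟩
      · rintro ⟨heq, -⟩
        exact hxy' (Sum.inr.inj heq).symm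
      · rintro ⟨rfl, h2, -⟩
        exact hAxy h2
    · have hxw : B.Adj (Sum.inr x) w := h.resolve_right hyw
      have hne : Sum.inr y ≠ w := by rintro rfl; exact hAxy hxw
      exact ⟨hne, Or.inr (Or.inl ⟨rfl, hxw, hyw⟩)⟩

lemma cadj_z (hbipR : ∀ a b : Y, ¬B.Adj (Sum.inr a) (Sum.inr b)) (z : Y) (hzx : z ≠ x) (hzy : z ≠ y) (w : V ⊕ Y) :
    (compress B (Sum.inr x) (Sum.inr y)).Adj (Sum.inr z) w ↔ B.Adj (Sum.inr z) w := by
  rw [compress_adj]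
  constructor
  · rintro ⟨hne, (⟨h1, h2, h3⟩ | ⟨h1, h2, h3⟩ | ⟨h1, h2, h3⟩)⟩
    · exact h1
    · exact absurd (Sum.inr.inj h1) hzy
    · exact absurd h2 (hbipR x z)
  · intro h
    refine ⟨h.ne, Or.inl ⟨h, ?_, ?_⟩⟩
    · rintro ⟨heq, -⟩
      exact hzx (Sum.inr.inj heq)
    · rintro ⟨-, h2, -⟩
      exact hbipR x z h2

lemma cadj_l (v : V) (w : V ⊕ Y) (hwx : w ≠ Sum.inr x) (hwy : w ≠ Sum.inr y) :
    (compress B (Sum.inr x) (Sum.inr y)).Adj (Sum.inl v) w ↔ B.Adj (Sum.inl v) w := by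
  rw [compress_adj]
  constructor
  · rintro ⟨hne, (⟨h1, h2, h3⟩ | ⟨h1, h2, h3⟩ | ⟨h1, h2, h3⟩)⟩
    · exact h1
    · exact absurd h1 (by simp)
    · exact absurd h1 hwy
  · intro h
    refine ⟨h.ne, Or.inl ⟨h, ?_, ?_⟩⟩
    · rintro ⟨heq, -⟩
      exact Sum.inl_ne_inr heq
    · rintro ⟨heq, -⟩
      exact hwx heq
end Adj

section Deg
variable {V Y : Type} [Fintype V] [Fintype Y] (B : SimpleGraph (V ⊕ Y)) (x y : Y)

lemma cdeg_z (hbipR : ∀ a b : Y, ¬B.Adj (Sum.inr a) (Sum.inr b))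
    (z : Y) (hzx : z ≠ x) (hzy : z ≠ y) :
    (compress B (Sum.inr x) (Sum.inr y)).degree (Sum.inr z) = B.degree (Sum.inr z) := by
  unfold SimpleGraph.degree
  congr 1
  ext w
  simp only [SimpleGraph.mem_neighborFinset]
  exact cadj_z B x y hbipR z hzx hzy w

lemma cNx (hxy' : x ≠ y) :
    (compress B (Sum.inr x) (Sum.inr y)).neighborFinset (Sum.inr x)
      = B.neighborFinset (Sum.inr x) ∩ B.neighborFinset (Sum.inr y) := by
  ext w
  simp only [SimpleGraph.mem_neighborFinset, Finset.mem_inter]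
  exact cadj_x B x y hxy' w

lemma cNy (hbipR : ∀ a b : Y, ¬B.Adj (Sum.inr a) (Sum.inr b)) (hxy' : x ≠ y) :
    (compress B (Sum.inr x) (Sum.inr y)).neighborFinset (Sum.inr y)
      = B.neighborFinset (Sum.inr x) ∪ B.neighborFinset (Sum.inr y) := by
  ext w
  simp only [SimpleGraph.mem_neighborFinset, Finset.mem_union]
  exact cadj_y B x y hbipR hxy' w

lemma cdeg_l (hbipR : ∀ a b : Y, ¬B.Adj (Sum.inr a) (Sum.inr b)) (hxy' : x ≠ y) (v : V) :
    (compress B (Sum.inr x) (Sum.inr y)).degree (Sum.inl v) = B.degree (Sum.inl v) := by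
  classical
  have hne : (Sum.inr x : V ⊕ Y) ≠ Sum.inr y := by simp [hxy']
  rw [SimpleGraph.degree, SimpleGraph.degree, SimpleGraph.neighborFinset_eq_filter,
      SimpleGraph.neighborFinset_eq_filter, Finset.card_filter, Finset.card_filter,
      sum_split_two _ (Sum.inr x) (Sum.inr y) hne, sum_split_two _ (Sum.inr x) (Sum.inr y) hne]
  have htail : ∑ c ∈ (Finset.univ.erase (Sum.inr x : V ⊕ Y)).erase (Sum.inr y),
      (if (compress B (Sum.inr x) (Sum.inr y)).Adj (Sum.inl v) c then 1 else 0) =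
      ∑ c ∈ (Finset.univ.erase (Sum.inr x : V ⊕ Y)).erase (Sum.inr y),
      (if B.Adj (Sum.inl v) c then 1 else 0) := by
    refine Finset.sum_congr rfl fun c hc => ?_
    simp only [Finset.mem_erase] at hc
    rw [if_congr (cadj_l B x y v c hc.2.1 hc.1) rfl rfl]
  rw [htail]
  have hx' : (compress B (Sum.inr x) (Sum.inr y)).Adj (Sum.inl v) (Sum.inr x) ↔
      B.Adj (Sum.inl v) (Sum.inr x) ∧ B.Adj (Sum.inl v) (Sum.inr y) := by
    rw [SimpleGraph.adj_comm, cadj_x B x y hxy',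
        SimpleGraph.adj_comm B (Sum.inr x) (Sum.inl v),
        SimpleGraph.adj_comm B (Sum.inr y) (Sum.inl v)]
  have hy' : (compress B (Sum.inr x) (Sum.inr y)).Adj (Sum.inl v) (Sum.inr y) ↔
      B.Adj (Sum.inl v) (Sum.inr x) ∨ B.Adj (Sum.inl v) (Sum.inr y) := by
    rw [SimpleGraph.adj_comm, cadj_y B x y hbipR hxy',
        SimpleGraph.adj_comm B (Sum.inr x) (Sum.inl v),
        SimpleGraph.adj_comm B (Sum.inr y) (Sum.inl v)]
  by_cases hP : B.Adj (Sum.inl v) (Sum.inr x) <;> by_cases hQ : B.Adj (Sum.inl v) (Sum.inr y) <;>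
    simp [hx', hy', hP, hQ]
end Deg

/-- If `B` is bipartite with bipartition `(V(H), Y)` and `x, y ∈ Y` are (non-adjacent) vertices
with incomparable neighborhoods, then `ψ_H(B) ≤ ψ_H(B_{x→y})` and `d₂(B) < d₂(B_{x→y})`. -/
theorem psi_le_compress_and_degSq_lt_compress {V Y : Type}
    [Fintype V] [Fintype Y] [DecidableEq V] [DecidableEq Y]
    (H : SimpleGraph V) (B : SimpleGraph (V ⊕ Y))
    (hbipL : ∀ a b : V, ¬B.Adj (Sum.inl a) (Sum.inl b))
    (hbipR : ∀ a b : Y, ¬B.Adj (Sum.inr a) (Sum.inr b))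
    (x y : Y)
    (hxy : ¬B.neighborSet (Sum.inr x) ⊆ B.neighborSet (Sum.inr y))
    (hyx : ¬B.neighborSet (Sum.inr y) ⊆ B.neighborSet (Sum.inr x)) :
    psi H B ≤ psi H (compress B (Sum.inr x) (Sum.inr y)) ∧
      degSq B < degSq (compress B (Sum.inr x) (Sum.inr y)) := by
  classical
  have hxy' : x ≠ y := by rintro rfl; exact hxy fun _ h => h
  set B' := compress B (Sum.inr x) (Sum.inr y) with hB'
  set A := B.neighborFinset (Sum.inr x) with hA
  set C := B.neighborFinset (Sum.inr y) with hC
  obtain ⟨a, haA, haC⟩ : ∃ a, a ∈ A ∧ a ∉ C := by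
    rw [Set.not_subset] at hxy
    obtain ⟨a, h1, h2⟩ := hxy
    exact ⟨a, by simpa [hA, SimpleGraph.mem_neighborFinset] using h1,
      by simpa [hC, SimpleGraph.mem_neighborFinset] using h2⟩
  obtain ⟨b, hbC, hbA⟩ : ∃ b, b ∈ C ∧ b ∉ A := by
    rw [Set.not_subset] at hyx
    obtain ⟨b, h1, h2⟩ := hyx
    exact ⟨b, by simpa [hC, SimpleGraph.mem_neighborFinset] using h1,
      by simpa [hA, SimpleGraph.mem_neighborFinset] using h2⟩
  have hcard : (A ∩ C).card + (A ∪ C).card = A.card + C.card :=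
    Finset.card_inter_add_card_union A C
  have hdC : C.card < (A ∪ C).card :=
    Finset.card_lt_card ⟨Finset.subset_union_right,
      fun hs => haC (hs (Finset.mem_union_left _ haA))⟩
  have hdA : A.card < (A ∪ C).card :=
    Finset.card_lt_card ⟨Finset.subset_union_left,
      fun hs => hbA (hs (Finset.mem_union_right _ hbC))⟩
  have hkey : A.card ^ 2 + C.card ^ 2 < (A ∩ C).card ^ 2 + (A ∪ C).card ^ 2 := by
    have hA1 : (A.card : ℤ) + 1 ≤ ((A ∪ C).card : ℤ) := by exact_mod_cast hdA
    have hC1 : (C.card : ℤ) + 1 ≤ ((A ∪ C).card : ℤ) := by exact_mod_cast hdC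
    have hc : ((A ∩ C).card : ℤ) + ((A ∪ C).card : ℤ) = (A.card : ℤ) + (C.card : ℤ) := by
      exact_mod_cast hcard
    have hprod : (1 : ℤ) ≤ (((A ∪ C).card : ℤ) - A.card) * (((A ∪ C).card : ℤ) - C.card) := by
      nlinarith
    zify
    nlinarith [hprod, hc]
  have hdx : B'.degree (Sum.inr x) = (A ∩ C).card := by
    rw [hB', SimpleGraph.degree, cNx B x y hxy']
    congr 1
    ext w
    simp [hA, hC]
  have hdy : B'.degree (Sum.inr y) = (A ∪ C).card := by
    rw [hB', SimpleGraph.degree, cNy B x y hbipR hxy']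
    congr 1
    ext w
    simp [hA, hC]
  have hdx0 : B.degree (Sum.inr x) = A.card := rfl
  have hdy0 : B.degree (Sum.inr y) = C.card := rfl
  constructor
  · -- psi
    rw [psi, psi]
    have h1 : ∑ v : V, (B'.degree (Sum.inl v)).choose 2
        = ∑ v : V, (B.degree (Sum.inl v)).choose 2 :=
      Finset.sum_congr rfl fun v _ => by rw [cdeg_l B x y hbipR hxy' v]
    rw [h1]
    refine Nat.add_le_add_left ?_ _
    rw [sum_split_two (fun z : Y => ((Finset.powersetCard 2 (Finset.univ : Finset V)).filter
        (fun p => (∀ i ∈ p, B.Adj (Sum.inr z) (Sum.inl i)) ∧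
          ∀ i ∈ p, ∀ j ∈ p, i ≠ j → ¬H.Adj i j)).card) x y hxy',
      sum_split_two (fun z : Y => ((Finset.powersetCard 2 (Finset.univ : Finset V)).filter
        (fun p => (∀ i ∈ p, B'.Adj (Sum.inr z) (Sum.inl i)) ∧
          ∀ i ∈ p, ∀ j ∈ p, i ≠ j → ¬H.Adj i j)).card) x y hxy']
    have htail : ∑ z ∈ (Finset.univ.erase x).erase y,
        ((Finset.powersetCard 2 (Finset.univ : Finset V)).filter
          (fun p => (∀ i ∈ p, B.Adj (Sum.inr z) (Sum.inl i)) ∧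
            ∀ i ∈ p, ∀ j ∈ p, i ≠ j → ¬H.Adj i j)).card
        = ∑ z ∈ (Finset.univ.erase x).erase y,
        ((Finset.powersetCard 2 (Finset.univ : Finset V)).filter
          (fun p => (∀ i ∈ p, B'.Adj (Sum.inr z) (Sum.inl i)) ∧
            ∀ i ∈ p, ∀ j ∈ p, i ≠ j → ¬H.Adj i j)).card := by
      refine Finset.sum_congr rfl fun z hz => ?_
      simp only [Finset.mem_erase] at hz
      congr 1
      apply Finset.filter_congr
      intro p _
      have : ∀ i : V, (B'.Adj (Sum.inr z) (Sum.inl i) ↔ B.Adj (Sum.inr z) (Sum.inl i)) :=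
        fun i => cadj_z B x y hbipR z hz.2.1 hz.1 (Sum.inl i)
      constructor
      · rintro ⟨h1, h2⟩; exact ⟨fun i hi => (this i).mpr (h1 i hi), h2⟩
      · rintro ⟨h1, h2⟩; exact ⟨fun i hi => (this i).mp (h1 i hi), h2⟩
    rw [htail]
    refine Nat.add_le_add_right ?_ _
    -- head inequality
    set U := Finset.powersetCard 2 (Finset.univ : Finset V) with hU
    set Sx := U.filter (fun p => (∀ i ∈ p, B.Adj (Sum.inr x) (Sum.inl i)) ∧
      ∀ i ∈ p, ∀ j ∈ p, i ≠ j → ¬H.Adj i j) with hSx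
    set Sy := U.filter (fun p => (∀ i ∈ p, B.Adj (Sum.inr y) (Sum.inl i)) ∧
      ∀ i ∈ p, ∀ j ∈ p, i ≠ j → ¬H.Adj i j) with hSy
    have hx' : U.filter (fun p => (∀ i ∈ p, B'.Adj (Sum.inr x) (Sum.inl i)) ∧
        ∀ i ∈ p, ∀ j ∈ p, i ≠ j → ¬H.Adj i j) = Sx ∩ Sy := by
      ext p
      simp only [hSx, hSy, Finset.mem_inter, Finset.mem_filter]
      constructor
      · rintro ⟨hUp, hall, hind⟩
        exact ⟨⟨hUp, fun i hi => ((cadj_x B x y hxy' (Sum.inl i)).mp (hall i hi)).1, hind⟩,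
          ⟨hUp, fun i hi => ((cadj_x B x y hxy' (Sum.inl i)).mp (hall i hi)).2, hind⟩⟩
      · rintro ⟨⟨hUp, h1, hind⟩, ⟨-, h2, -⟩⟩
        exact ⟨hUp, fun i hi => (cadj_x B x y hxy' (Sum.inl i)).mpr ⟨h1 i hi, h2 i hi⟩, hind⟩
    have hy' : Sx ∪ Sy ⊆ U.filter (fun p => (∀ i ∈ p, B'.Adj (Sum.inr y) (Sum.inl i)) ∧
        ∀ i ∈ p, ∀ j ∈ p, i ≠ j → ¬H.Adj i j) := by
      intro p hp
      rw [Finset.mem_union] at hp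
      rw [Finset.mem_filter]
      rcases hp with hp | hp
      · rw [hSx, Finset.mem_filter] at hp
        exact ⟨hp.1, fun i hi => (cadj_y B x y hbipR hxy' (Sum.inl i)).mpr
          (Or.inl (hp.2.1 i hi)), hp.2.2⟩
      · rw [hSy, Finset.mem_filter] at hp
        exact ⟨hp.1, fun i hi => (cadj_y B x y hbipR hxy' (Sum.inl i)).mpr
          (Or.inr (hp.2.1 i hi)), hp.2.2⟩
    have hcu : Sx.card + Sy.card = (Sx ∪ Sy).card + (Sx ∩ Sy).card :=
      (Finset.card_union_add_card_inter _ _).symm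
    rw [hx']
    calc Sx.card + Sy.card = (Sx ∪ Sy).card + (Sx ∩ Sy).card := hcu
      _ ≤ (U.filter (fun p => (∀ i ∈ p, B'.Adj (Sum.inr y) (Sum.inl i)) ∧
            ∀ i ∈ p, ∀ j ∈ p, i ≠ j → ¬H.Adj i j)).card + (Sx ∩ Sy).card :=
          Nat.add_le_add_right (Finset.card_le_card hy') _
      _ = (Sx ∩ Sy).card + (U.filter (fun p => (∀ i ∈ p, B'.Adj (Sum.inr y) (Sum.inl i)) ∧
            ∀ i ∈ p, ∀ j ∈ p, i ≠ j → ¬H.Adj i j)).card := Nat.add_comm _ _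
  · -- degSq
    rw [degSq, degSq, Fintype.sum_sum_type, Fintype.sum_sum_type]
    have hL : (∑ v : V, (B'.degree (Sum.inl v)) ^ 2) = ∑ v : V, (B.degree (Sum.inl v)) ^ 2 :=
      Finset.sum_congr rfl fun v _ => by rw [cdeg_l B x y hbipR hxy' v]
    rw [hL]
    refine Nat.add_lt_add_left ?_ _
    rw [sum_split_two (fun z : Y => (B.degree (Sum.inr z)) ^ 2) x y hxy',
        sum_split_two (fun z : Y => (B'.degree (Sum.inr z)) ^ 2) x y hxy']
    have htail : ∑ z ∈ (Finset.univ.erase x).erase y, (B'.degree (Sum.inr z)) ^ 2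
        = ∑ z ∈ (Finset.univ.erase x).erase y, (B.degree (Sum.inr z)) ^ 2 := by
      refine Finset.sum_congr rfl fun z hz => ?_
      simp only [Finset.mem_erase] at hz
      rw [cdeg_z B x y hbipR z hz.2.1 hz.1]
    rw [htail, hdx, hdy, hdx0, hdy0]
    exact Nat.add_lt_add_right hkey _
end

section
/- Let X and Y be fixed finite disjoint vertex sets, and let 𝓑 be a family of bipartite graphs with bipartition (X, Y) such that, for any B' ∈ 𝓑 and any x, y ∈ Y with N_{B'}(x) ⊄ N_{B'}(y) and N_{B'}(y) ⊄ N_{B'}(x), the compression B'_{x→y} also belongs to 𝓑. If B ∈ 𝓑 satisfies d_2(B) = max{d_2(B') : B' ∈ 𝓑}, then B is a bipartite threshold graph, i.e., the neighborhoods of the vertices of Y in B are linearly ordered by inclusion. -/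
open scoped Classical
open Finset

section aux
variable {W : Type} (G : SimpleGraph W) {x y : W}

lemma compress_adj_left (hxy : x ≠ y) (u : W) :
    (compress G x y).Adj x u ↔ G.Adj x u ∧ G.Adj y u := by
  constructor
  · rintro ⟨hne, ⟨h1, h2, _⟩ | ⟨hxy', _⟩ | ⟨_, hxx, _⟩⟩
    · by_cases hy : G.Adj y u
      · exact ⟨h1, hy⟩
      · exact absurd ⟨rfl, h1, hy⟩ h2
    · exact absurd hxy' hxy
    · exact absurd hxx G.irrefl
  · rintro ⟨h1, h2⟩
    refine ⟨h1.ne, Or.inl ⟨h1, ?_, ?_⟩⟩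
    · rintro ⟨-, -, h⟩; exact h h2
    · rintro ⟨rfl, hxx, -⟩; exact G.irrefl hxx

lemma compress_adj_right (hxy : x ≠ y) (hna : ¬G.Adj x y) (u : W) :
    (compress G x y).Adj y u ↔ G.Adj y u ∨ G.Adj x u := by
  constructor
  · rintro ⟨hne, ⟨h1, _, _⟩ | ⟨_, h2, _⟩ | ⟨rfl, h3, _⟩⟩
    · exact Or.inl h1
    · exact Or.inr h2
    · exact absurd h3 hna
  · intro h
    have hne : y ≠ u := by
      rintro rfl
      rcases h with h | h
      · exact G.irrefl h
      · exact hna h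
    by_cases hy : G.Adj y u
    · refine ⟨hne, Or.inl ⟨hy, ?_, ?_⟩⟩
      · rintro ⟨h', -⟩; exact hxy h'.symm
      · rintro ⟨-, h', -⟩; exact hna h'
    · rcases h with h | h
      · exact absurd h hy
      · exact ⟨hne, Or.inr (Or.inl ⟨rfl, h, hy⟩)⟩
end aux

section aux2
variable {W : Type} (G : SimpleGraph W) {x y v : W}

lemma compress_adj_other_mem (hv1 : G.Adj x v) (hv2 : ¬G.Adj y v)
    (hvy : v ≠ y) (u : W) :
    (compress G x y).Adj v u ↔ (G.Adj v u ∧ u ≠ x) ∨ u = y := by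
  constructor
  · rintro ⟨hne, ⟨h1, h2, h3⟩ | ⟨h', _⟩ | ⟨rfl, _⟩⟩
    · refine Or.inl ⟨h1, ?_⟩
      rintro rfl; exact h3 ⟨rfl, hv1, hv2⟩
    · exact absurd h' hvy
    · exact Or.inr rfl
  · rintro (⟨h1, h2⟩ | rfl)
    · refine ⟨h1.ne, Or.inl ⟨h1, ?_, ?_⟩⟩
      · rintro ⟨rfl, -, -⟩; exact G.irrefl hv1
      · rintro ⟨h', -, -⟩; exact h2 h'
    · exact ⟨hvy, Or.inr (Or.inr ⟨rfl, hv1, hv2⟩)⟩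

lemma compress_adj_other_not (hv : ¬(G.Adj x v ∧ ¬G.Adj y v))
    (hvx : v ≠ x) (hvy : v ≠ y) (u : W) :
    (compress G x y).Adj v u ↔ G.Adj v u := by
  constructor
  · rintro ⟨hne, ⟨h1, -, -⟩ | ⟨h', -⟩ | ⟨-, h2, h3⟩⟩
    · exact h1
    · exact absurd h' hvy
    · exact absurd ⟨h2, h3⟩ hv
  · intro h1
    refine ⟨h1.ne, Or.inl ⟨h1, ?_, ?_⟩⟩
    · rintro ⟨h', -, -⟩; exact hvx h'
    · rintro ⟨-, h2, h3⟩; exact hv ⟨h2, h3⟩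

end aux2

section deg
variable {W : Type} [Fintype W] (G : SimpleGraph W) {x y : W}

lemma compress_nf_left (hxy : x ≠ y) :
    (compress G x y).neighborFinset x = G.neighborFinset x ∩ G.neighborFinset y := by
  ext u
  simp only [SimpleGraph.mem_neighborFinset, Finset.mem_inter, compress_adj_left G hxy]

lemma compress_nf_right (hxy : x ≠ y) (hna : ¬G.Adj x y) :
    (compress G x y).neighborFinset y = G.neighborFinset x ∪ G.neighborFinset y := by
  ext u
  simp only [SimpleGraph.mem_neighborFinset, Finset.mem_union, compress_adj_right G hxy hna]
  tauto

lemma compress_degree_other (hvx : v ≠ x) (hvy : v ≠ y) (hxy : x ≠ y) :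
    (compress G x y).degree v = G.degree v := by
  by_cases hv : G.Adj x v ∧ ¬G.Adj y v
  · have hnf : (compress G x y).neighborFinset v =
        insert y ((G.neighborFinset v).erase x) := by
      ext u
      simp only [SimpleGraph.mem_neighborFinset, Finset.mem_insert, Finset.mem_erase,
        compress_adj_other_mem G hv.1 hv.2 hvy]
      tauto
    have hy' : y ∉ (G.neighborFinset v).erase x := by
      simp only [Finset.mem_erase, SimpleGraph.mem_neighborFinset]
      rintro ⟨-, h⟩; exact hv.2 h.symm
    have hx' : x ∈ G.neighborFinset v := by
      simp only [SimpleGraph.mem_neighborFinset]; exact hv.1.symm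
    have h1 : 1 ≤ (G.neighborFinset v).card := Finset.card_pos.mpr ⟨x, hx'⟩
    show ((compress G x y).neighborFinset v).card = (G.neighborFinset v).card
    rw [hnf, Finset.card_insert_of_notMem hy', Finset.card_erase_of_mem hx']
    omega
  · have hnf : (compress G x y).neighborFinset v = G.neighborFinset v := by
      ext u
      simp only [SimpleGraph.mem_neighborFinset, compress_adj_other_not G hv hvx hvy]
    show ((compress G x y).neighborFinset v).card = (G.neighborFinset v).card
    rw [hnf]

end deg

/-- Let `𝓑` be a family of bipartite graphs with bipartition `(X, Y)` closed under compressions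
`B'_{x→y}` for `x, y ∈ Y` with incomparable neighborhoods.  If `B ∈ 𝓑` maximizes `d₂` over `𝓑`,
then `B` is a bipartite threshold graph: the neighborhoods of the vertices of `Y` are linearly
ordered by inclusion. -/
theorem max_degSq_is_threshold {X Y : Type}
    [Fintype X] [Fintype Y] [DecidableEq X] [DecidableEq Y]
    (𝓑 : Set (SimpleGraph (X ⊕ Y)))
    (hbip : ∀ B' ∈ 𝓑, (∀ a b : X, ¬B'.Adj (Sum.inl a) (Sum.inl b)) ∧
      (∀ a b : Y, ¬B'.Adj (Sum.inr a) (Sum.inr b)))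
    (hclosed : ∀ B' ∈ 𝓑, ∀ x y : Y,
      ¬B'.neighborSet (Sum.inr x) ⊆ B'.neighborSet (Sum.inr y) →
      ¬B'.neighborSet (Sum.inr y) ⊆ B'.neighborSet (Sum.inr x) →
      compress B' (Sum.inr x) (Sum.inr y) ∈ 𝓑)
    (B : SimpleGraph (X ⊕ Y)) (hB : B ∈ 𝓑)
    (hmax : ∀ B' ∈ 𝓑, degSq B' ≤ degSq B) :
    ∀ x y : Y, B.neighborSet (Sum.inr x) ⊆ B.neighborSet (Sum.inr y) ∨
      B.neighborSet (Sum.inr y) ⊆ B.neighborSet (Sum.inr x) := by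
  intro x y
  by_contra hcon
  obtain ⟨hxy, hyx⟩ := not_or.mp hcon
  set a : X ⊕ Y := Sum.inr x with ha
  set b : X ⊕ Y := Sum.inr y with hb
  have hab : a ≠ b := by
    rintro h
    exact hxy (h ▸ subset_rfl)
  have hna : ¬B.Adj a b := (hbip B hB).2 x y
  have hC : compress B a b ∈ 𝓑 := hclosed B hB x y hxy hyx
  set C := compress B a b with hCdef
  -- witnesses
  obtain ⟨u, hu1, hu2⟩ := Set.not_subset.mp hxy
  obtain ⟨w, hw1, hw2⟩ := Set.not_subset.mp hyx
  -- degree facts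
  have hdla : C.degree a = (B.neighborFinset a ∩ B.neighborFinset b).card := by
    show (C.neighborFinset a).card = _
    rw [hCdef, compress_nf_left B hab]
    congr 1
    ext u
    simp
  have hdlb : C.degree b = (B.neighborFinset a ∪ B.neighborFinset b).card := by
    show (C.neighborFinset b).card = _
    rw [hCdef, compress_nf_right B hab hna]
    congr 1
    ext u
    simp
  have hda : B.degree a = (B.neighborFinset a).card := rfl
  have hdb : B.degree b = (B.neighborFinset b).card := rfl
  have hsum : (B.neighborFinset a ∩ B.neighborFinset b).card +
      (B.neighborFinset a ∪ B.neighborFinset b).card = B.degree a + B.degree b := by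
    rw [hda, hdb]
    exact Finset.card_inter_add_card_union _ _
  have hslt : (B.neighborFinset a ∩ B.neighborFinset b).card < B.degree a := by
    rw [hda]
    apply Finset.card_lt_card
    refine ⟨Finset.inter_subset_left, fun hsub => ?_⟩
    have := hsub (by simpa [SimpleGraph.mem_neighborFinset] using hu1)
    rw [Finset.mem_inter] at this
    exact hu2 (by simpa [SimpleGraph.mem_neighborFinset] using this.2)
  have hSgt : B.degree a < (B.neighborFinset a ∪ B.neighborFinset b).card := by
    rw [hda]
    apply Finset.card_lt_card
    refine ⟨Finset.subset_union_left, fun hsub => ?_⟩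
    have := hsub (Finset.mem_union_right _
      (by simpa [SimpleGraph.mem_neighborFinset] using hw1))
    exact hw2 (by simpa [SimpleGraph.mem_neighborFinset] using this)
  -- sum splitting
  have hsplit : ∀ f : (X ⊕ Y) → ℕ,
      ∑ v, f v = ∑ v ∈ Finset.univ \ {a, b}, f v + (f a + f b) := by
    intro f
    rw [← Finset.sum_sdiff (Finset.subset_univ {a, b}), Finset.sum_pair hab]
  have hrest : ∑ v ∈ Finset.univ \ {a, b}, C.degree v ^ 2 =
      ∑ v ∈ Finset.univ \ {a, b}, B.degree v ^ 2 := by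
    refine Finset.sum_congr rfl fun v hv => ?_
    rw [Finset.mem_sdiff, Finset.mem_insert, Finset.mem_singleton] at hv
    push_neg at hv
    rw [compress_degree_other B hv.2.1 hv.2.2 hab]
  have hlt : degSq B < degSq C := by
    rw [degSq, degSq, hsplit (fun v => C.degree v ^ 2),
      hsplit (fun v => B.degree v ^ 2), hrest]
    have : B.degree a ^ 2 + B.degree b ^ 2 <
        C.degree a ^ 2 + C.degree b ^ 2 := by
      rw [hdla, hdlb]
      set s := (B.neighborFinset a ∩ B.neighborFinset b).card
      set S := (B.neighborFinset a ∪ B.neighborFinset b).card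
      set da := B.degree a
      set db := B.degree b
      have h1 : (s : ℤ) + S = da + db := by exact_mod_cast hsum
      have h2 : (s : ℤ) < da := by exact_mod_cast hslt
      have h3 : (da : ℤ) < S := by exact_mod_cast hSgt
      have : (da : ℤ) ^ 2 + db ^ 2 < s ^ 2 + S ^ 2 := by nlinarith
      exact_mod_cast this
    omega
  exact absurd (hmax C hC) (not_le.mpr hlt)
end

section
/- Let G be a finite simple graph with maximum degree at most r and let T be a cluster of G with common neighborhood S_T of size s and red graph R = R_T. Then the number of blue triangles at T — triangles of G containing two blue edges — is at most Σ_{v ∈ S_T} C(d_R(v), 2) + (1/2)·Σ_{v ∈ S_T} d_R(v)·(s − 1 − d_R(v)). -/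
open scoped Classical
open Finset

variable {V : Type} [Fintype V] [DecidableEq V]

lemma mem_commonNbrs {G : SimpleGraph V} {T : Finset V} {u : V} :
    u ∈ commonNbrs G T ↔ ∀ v ∈ T, G.Adj v u := by
  simp [commonNbrs]

lemma disj_T_S {G : SimpleGraph V} {T : Finset V} {x : V}
    (hT : x ∈ T) (hS : x ∈ commonNbrs G T) : False :=
  G.irrefl (mem_commonNbrs.1 hS x hT)

lemma blue_cases {G : SimpleGraph V} {T : Finset V} {u v : V}
    (h : IsBlueEdge G T u v) :
    (u ∈ commonNbrs G T ∧ v ∉ commonNbrs G T ∧ v ∉ T) ∨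
    (v ∈ commonNbrs G T ∧ u ∉ commonNbrs G T ∧ u ∉ T) := by
  rcases h.2 with ⟨h1, h2⟩ | ⟨h1, h2⟩
  · exact Or.inl ⟨h1, fun hc => h2 (Finset.mem_union_right _ hc),
      fun hc => h2 (Finset.mem_union_left _ hc)⟩
  · exact Or.inr ⟨h1, fun hc => h2 (Finset.mem_union_right _ hc),
      fun hc => h2 (Finset.mem_union_left _ hc)⟩

/-- If `uv` is blue and `u ∈ S`, then `v ∉ S ∪ T`. -/
lemma blue_other {G : SimpleGraph V} {T : Finset V} {u v : V}
    (h : IsBlueEdge G T u v) (hu : u ∈ commonNbrs G T) :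
    v ∉ commonNbrs G T ∧ v ∉ T := by
  rcases blue_cases h with ⟨_, h2, h3⟩ | ⟨_, h2, _⟩
  · exact ⟨h2, h3⟩
  · exact absurd hu h2

lemma red_nbr_eq (G : SimpleGraph V) (S : Finset V) {v : V} (hv : v ∈ S) :
    (redGraph G S).neighborFinset v = (S.erase v).filter (fun u => ¬ G.Adj v u) := by
  ext u
  rw [SimpleGraph.mem_neighborFinset]
  simp only [Finset.mem_filter, Finset.mem_erase, redGraph]
  constructor
  · rintro ⟨_, h2, h3, h4⟩; exact ⟨⟨h3.symm, h2⟩, h4⟩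
  · rintro ⟨⟨h1, h2⟩, h3⟩; exact ⟨hv, h2, fun e => h1 e.symm, h3⟩

lemma snbrs_card (G : SimpleGraph V) (S : Finset V) {v : V} (hv : v ∈ S) :
    ((S.erase v).filter (fun u => G.Adj v u)).card + (redGraph G S).degree v + 1 = S.card := by
  have h1 : (redGraph G S).degree v = ((S.erase v).filter (fun u => ¬ G.Adj v u)).card := by
    rw [← SimpleGraph.card_neighborFinset_eq_degree, red_nbr_eq G S hv]
  rw [h1, Finset.card_filter_add_card_filter_not, Finset.card_erase_add_one hv]

lemma blue_deg_le (G : SimpleGraph V) (r : ℕ) (hΔ : G.maxDegree ≤ r) (T : Finset V)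
    (hTS : T.card + (commonNbrs G T).card = r + 1) {v : V} (hv : v ∈ commonNbrs G T) :
    (Finset.univ.filter fun u => IsBlueEdge G T v u).card ≤
      (redGraph G (commonNbrs G T)).degree v := by
  set S := commonNbrs G T with hS
  set B := (S.erase v).filter (fun u => G.Adj v u) with hB
  set C := (Finset.univ.filter fun u => IsBlueEdge G T v u) with hC
  have hsub : T ∪ B ∪ C ⊆ G.neighborFinset v := by
    intro x hx
    rw [SimpleGraph.mem_neighborFinset]
    rcases Finset.mem_union.1 hx with hx | hx
    · rcases Finset.mem_union.1 hx with hx | hx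
      · exact (mem_commonNbrs.1 hv x hx).symm
      · exact (Finset.mem_filter.1 hx).2
    · exact (Finset.mem_filter.1 hx).2.1
  have hCmem : ∀ x ∈ C, x ∉ S ∧ x ∉ T := by
    intro x hx
    exact blue_other (Finset.mem_filter.1 hx).2 hv
  have hdTB : Disjoint T B := by
    rw [Finset.disjoint_left]
    intro x hxT hxB
    exact disj_T_S hxT (Finset.mem_erase.1 (Finset.mem_filter.1 hxB).1).2
  have hdTC : Disjoint (T ∪ B) C := by
    rw [Finset.disjoint_left]
    intro x hx hxC
    rcases Finset.mem_union.1 hx with hx | hx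
    · exact (hCmem x hxC).2 hx
    · exact (hCmem x hxC).1 (Finset.mem_erase.1 (Finset.mem_filter.1 hx).1).2
  have hcard : T.card + B.card + C.card ≤ r := by
    have h1 := Finset.card_le_card hsub
    rw [Finset.card_union_of_disjoint hdTC, Finset.card_union_of_disjoint hdTB] at h1
    calc T.card + B.card + C.card ≤ (G.neighborFinset v).card := h1
      _ = G.degree v := G.card_neighborFinset_eq_degree v
      _ ≤ G.maxDegree := G.degree_le_maxDegree v
      _ ≤ r := hΔ
  have h2 := snbrs_card G S hv
  rw [← hB] at h2
  omega

lemma blue_symm {G : SimpleGraph V} {T : Finset V} {u v : V}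
    (h : IsBlueEdge G T u v) : IsBlueEdge G T v u :=
  ⟨h.1.symm, h.2.symm⟩

lemma eq_triple {σ : Finset V} (hcard : σ.card = 3) {a b c : V}
    (ha : a ∈ σ) (hb : b ∈ σ) (hc : c ∈ σ)
    (hab : a ≠ b) (hac : a ≠ c) (hbc : b ≠ c) : σ = {a, b, c} := by
  have hsub : ({a, b, c} : Finset V) ⊆ σ := by
    intro x hx
    simp only [Finset.mem_insert, Finset.mem_singleton] at hx
    rcases hx with rfl | rfl | rfl <;> assumption
  have hcard' : ({a, b, c} : Finset V).card = 3 := by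
    rw [Finset.card_insert_of_notMem (by simp [hab, hac]),
      Finset.card_insert_of_notMem (by simp [hbc]), Finset.card_singleton]
  exact ((Finset.eq_of_subset_of_card_le hsub (by omega))).symm

/-- The number of blue triangles at a cluster `T` — triangles of `G` containing two blue
edges — is at most `Σ_{v ∈ S_T} C(d_R(v), 2) + (1/2)·Σ_{v ∈ S_T} d_R(v)·(s − 1 − d_R(v))`
(stated multiplied through by 2). -/
theorem blue_triangles_le {V : Type} [Fintype V] [DecidableEq V]
    (G : SimpleGraph V) (r : ℕ) (hΔ : G.maxDegree ≤ r)
    (T : Finset V) (hT : IsCluster G r T)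
    (hTS : T.card + (commonNbrs G T).card = r + 1) :
    2 * ((G.cliqueFinset 3).filter (fun σ => ∃ a ∈ σ, ∃ b ∈ σ, ∃ c ∈ σ, b ≠ c ∧
        IsBlueEdge G T a b ∧ IsBlueEdge G T a c)).card ≤
      2 * (∑ v ∈ commonNbrs G T, ((redGraph G (commonNbrs G T)).degree v).choose 2) +
        ∑ v ∈ commonNbrs G T, (redGraph G (commonNbrs G T)).degree v *
          ((commonNbrs G T).card - 1 - (redGraph G (commonNbrs G T)).degree v) := by
  classical
  set S := commonNbrs G T with hSdef
  set R := redGraph G S with hRdef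
  set P := (G.cliqueFinset 3).filter (fun σ => ∃ a ∈ σ, ∃ b ∈ σ, ∃ c ∈ σ, b ≠ c ∧
      IsBlueEdge G T a b ∧ IsBlueEdge G T a c) with hPdef
  -- basic facts about members of P
  have hPclique : ∀ σ ∈ P, G.IsClique ↑σ ∧ σ.card = 3 := by
    intro σ hσ
    have := (Finset.mem_filter.1 hσ).1
    rw [SimpleGraph.mem_cliqueFinset_iff] at this
    exact ⟨this.1, this.2⟩
  set q : Finset V → Prop := fun σ => ∃ a ∈ σ, a ∈ S ∧ ∃ b ∈ σ, ∃ c ∈ σ, b ≠ c ∧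
      IsBlueEdge G T a b ∧ IsBlueEdge G T a c with hqdef
  have hsplit : (P.filter q).card + (P.filter (fun σ => ¬ q σ)).card = P.card :=
    Finset.card_filter_add_card_filter_not _
  -- Bound on type-1 triangles
  have hP1 : (P.filter q).card ≤ ∑ a ∈ S, (R.degree a).choose 2 := by
    have hsub : P.filter q ⊆ S.biUnion (fun a => (P.filter q).filter
        (fun σ => a ∈ σ ∧ ∃ b ∈ σ, ∃ c ∈ σ, b ≠ c ∧
          IsBlueEdge G T a b ∧ IsBlueEdge G T a c)) := by
      intro σ hσ
      obtain ⟨a, haσ, haS, hrest⟩ := (Finset.mem_filter.1 hσ).2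
      exact Finset.mem_biUnion.2 ⟨a, haS, Finset.mem_filter.2 ⟨hσ, haσ, hrest⟩⟩
    refine le_trans (le_trans (Finset.card_le_card hsub) (Finset.card_biUnion_le))
      (Finset.sum_le_sum ?_)
    intro a haS
    have hinj : ((P.filter q).filter (fun σ => a ∈ σ ∧ ∃ b ∈ σ, ∃ c ∈ σ, b ≠ c ∧
        IsBlueEdge G T a b ∧ IsBlueEdge G T a c)).card ≤
        ((Finset.univ.filter fun u => IsBlueEdge G T a u).powersetCard 2).card := by
      apply Finset.card_le_card_of_injOn (fun σ => σ.erase a)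
      · intro σ hσ
        obtain ⟨hσP, haσ, b, hbσ, c, hcσ, hbc, hab, hac⟩ := Finset.mem_filter.1 hσ
        have hσP' := Finset.mem_of_mem_filter σ hσP
        obtain ⟨hcl, hcard⟩ := hPclique σ hσP'
        have hanb : a ≠ b := G.ne_of_adj hab.1
        have hanc : a ≠ c := G.ne_of_adj hac.1
        have hσ3 : σ = {a, b, c} := eq_triple hcard haσ hbσ hcσ hanb hanc hbc
        simp only [Finset.mem_coe, Finset.mem_powersetCard]
        constructor
        · intro x hx
          obtain ⟨hxa, hxσ⟩ := Finset.mem_erase.1 hx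
          rw [hσ3] at hxσ
          simp only [Finset.mem_insert, Finset.mem_singleton] at hxσ
          rcases hxσ with rfl | rfl | rfl
          · exact absurd rfl hxa
          · exact Finset.mem_filter.2 ⟨Finset.mem_univ _, hab⟩
          · exact Finset.mem_filter.2 ⟨Finset.mem_univ _, hac⟩
        · rw [Finset.card_erase_of_mem haσ, hcard]
      · intro σ hσ σ' hσ' heq
        obtain ⟨_, haσ, _⟩ := Finset.mem_filter.1 (Finset.mem_coe.1 hσ)
        obtain ⟨_, haσ', _⟩ := Finset.mem_filter.1 (Finset.mem_coe.1 hσ')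
        rw [← Finset.insert_erase haσ, ← Finset.insert_erase haσ']
        exact congrArg (insert a) heq
    refine hinj.trans ?_
    rw [Finset.card_powersetCard]
    exact Nat.choose_le_choose 2 (blue_deg_le G r hΔ T hTS haS)
  -- Bound on type-2 triangles
  have hP2 : 2 * (P.filter (fun σ => ¬ q σ)).card ≤
      ∑ v ∈ S, R.degree v * (S.card - 1 - R.degree v) := by
    set P2 := P.filter (fun σ => ¬ q σ) with hP2def
    -- each type-2 triangle has exactly two vertices in S
    have htwo : ∀ σ ∈ P2, (S.filter (fun v => v ∈ σ)).card = 2 := by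
      intro σ hσ
      obtain ⟨hσP, hnq⟩ := Finset.mem_filter.1 hσ
      obtain ⟨a, haσ, b, hbσ, c, hcσ, hbc, hab, hac⟩ := (Finset.mem_filter.1 hσP).2
      obtain ⟨hcl, hcard⟩ := hPclique σ hσP
      have hanS : a ∉ S := fun haS => hnq ⟨a, haσ, haS, b, hbσ, c, hcσ, hbc, hab, hac⟩
      have hbS : b ∈ S := by
        rcases blue_cases hab with ⟨h1, _⟩ | ⟨h1, _⟩
        · exact absurd h1 hanS
        · exact h1
      have hcS : c ∈ S := by
        rcases blue_cases hac with ⟨h1, _⟩ | ⟨h1, _⟩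
        · exact absurd h1 hanS
        · exact h1
      have hanb : a ≠ b := G.ne_of_adj hab.1
      have hanc : a ≠ c := G.ne_of_adj hac.1
      have hσ3 : σ = {a, b, c} := eq_triple hcard haσ hbσ hcσ hanb hanc hbc
      have : S.filter (fun v => v ∈ σ) = {b, c} := by
        ext x
        simp only [Finset.mem_filter, hσ3, Finset.mem_insert, Finset.mem_singleton]
        constructor
        · rintro ⟨hxS, rfl | rfl | rfl⟩
          · exact absurd hxS hanS
          · exact Or.inl rfl
          · exact Or.inr rfl
        · rintro (rfl | rfl)
          · exact ⟨hbS, Or.inr (Or.inl rfl)⟩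
          · exact ⟨hcS, Or.inr (Or.inr rfl)⟩
      rw [this, Finset.card_insert_of_notMem (by simp [hbc]), Finset.card_singleton]
    -- double counting
    have hcount : 2 * P2.card = ∑ v ∈ S, (P2.filter (fun σ => v ∈ σ)).card := by
      have h1 : ∑ σ ∈ P2, (S.filter (fun v => v ∈ σ)).card = 2 * P2.card := by
        rw [Finset.sum_congr rfl htwo, Finset.sum_const, smul_eq_mul, mul_comm]
      rw [← h1]
      simp only [Finset.card_filter]
      exact Finset.sum_comm
    rw [hcount]
    refine Finset.sum_le_sum ?_
    intro v hvS
    -- injection into blue nbrs × S-nbrs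
    have hstep : (P2.filter (fun σ => v ∈ σ)).card ≤
        ((Finset.univ.filter fun u => IsBlueEdge G T v u) ×ˢ
          ((S.erase v).filter (fun u => G.Adj v u))).card := by
      set f : Finset V → V × V := fun σ =>
        if h : ∃ p : V × V, p.1 ∈ σ ∧ p.2 ∈ σ ∧ IsBlueEdge G T p.1 v ∧
            IsBlueEdge G T p.1 p.2 ∧ p.2 ≠ v then h.choose else (v, v) with hfdef
      have hfspec : ∀ σ ∈ P2.filter (fun σ => v ∈ σ),
          (f σ).1 ∈ σ ∧ (f σ).2 ∈ σ ∧ IsBlueEdge G T (f σ).1 v ∧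
            IsBlueEdge G T (f σ).1 (f σ).2 ∧ (f σ).2 ≠ v := by
        intro σ hσ
        obtain ⟨hσP2, hvσ⟩ := Finset.mem_filter.1 hσ
        obtain ⟨hσP, hnq⟩ := Finset.mem_filter.1 hσP2
        obtain ⟨a, haσ, b, hbσ, c, hcσ, hbc, hab, hac⟩ := (Finset.mem_filter.1 hσP).2
        obtain ⟨hcl, hcard⟩ := hPclique σ hσP
        have hanS : a ∉ S := fun haS => hnq ⟨a, haσ, haS, b, hbσ, c, hcσ, hbc, hab, hac⟩
        have hvna : v ≠ a := fun h => hanS (h ▸ hvS)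
        have hσ3 : σ = {a, b, c} :=
          eq_triple hcard haσ hbσ hcσ (G.ne_of_adj hab.1) (G.ne_of_adj hac.1) hbc
        have hvbc : v = b ∨ v = c := by
          rw [hσ3] at hvσ
          simp only [Finset.mem_insert, Finset.mem_singleton] at hvσ
          tauto
        have hex : ∃ p : V × V, p.1 ∈ σ ∧ p.2 ∈ σ ∧ IsBlueEdge G T p.1 v ∧
            IsBlueEdge G T p.1 p.2 ∧ p.2 ≠ v := by
          rcases hvbc with rfl | rfl
          · exact ⟨(a, c), haσ, hcσ, blue_symm (blue_symm hab), hac, fun h => hbc h.symm⟩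
          · exact ⟨(a, b), haσ, hbσ, hac, hab, hbc⟩
        rw [hfdef]
        simp only [dif_pos hex]
        exact hex.choose_spec
      apply Finset.card_le_card_of_injOn f
      · intro σ hσ
        obtain ⟨h1, h2, h3, h4, h5⟩ := hfspec σ hσ
        obtain ⟨hσP2, hvσ⟩ := Finset.mem_filter.1 hσ
        obtain ⟨hcl, hcard⟩ := hPclique σ (Finset.mem_of_mem_filter σ hσP2)
        have hxnS : (f σ).1 ∉ S := (blue_other (blue_symm h3) hvS).1
        have hyS : (f σ).2 ∈ S := by
          rcases blue_cases h4 with ⟨h', _⟩ | ⟨h', _⟩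
          · exact absurd h' hxnS
          · exact h'
        have hvny : v ≠ (f σ).2 := fun h => h5 h.symm
        have hadj : G.Adj v (f σ).2 := hcl hvσ h2 hvny
        refine Finset.mem_product.2 ⟨?_, ?_⟩
        · exact Finset.mem_filter.2 ⟨Finset.mem_univ _, blue_symm h3⟩
        · exact Finset.mem_filter.2 ⟨Finset.mem_erase.2 ⟨h5, hyS⟩, hadj⟩
      · intro σ hσ σ' hσ' heq
        have hσm := Finset.mem_coe.1 hσ
        have hσm' := Finset.mem_coe.1 hσ'
        obtain ⟨h1, h2, h3, h4, h5⟩ := hfspec σ hσm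
        obtain ⟨h1', h2', h3', h4', h5'⟩ := hfspec σ' hσm'
        obtain ⟨hσP2, hvσ⟩ := Finset.mem_filter.1 hσm
        obtain ⟨hσP2', hvσ'⟩ := Finset.mem_filter.1 hσm'
        obtain ⟨_, hcard⟩ := hPclique σ (Finset.mem_of_mem_filter σ hσP2)
        obtain ⟨_, hcard'⟩ := hPclique σ' (Finset.mem_of_mem_filter σ' hσP2')
        have e1 : σ = {v, (f σ).1, (f σ).2} :=
          eq_triple hcard hvσ h1 h2 (fun h => (G.ne_of_adj h3.1) h.symm)
            (fun h => h5 h.symm) (G.ne_of_adj h4.1)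
        have e2 : σ' = {v, (f σ').1, (f σ').2} :=
          eq_triple hcard' hvσ' h1' h2' (fun h => (G.ne_of_adj h3'.1) h.symm)
            (fun h => h5' h.symm) (G.ne_of_adj h4'.1)
        rw [e1, e2, heq]
    refine hstep.trans ?_
    rw [Finset.card_product]
    have hsn := snbrs_card G S hvS
    rw [← hRdef] at hsn
    have hbd := blue_deg_le G r hΔ T hTS hvS
    rw [← hSdef, ← hRdef] at hbd
    have : ((S.erase v).filter (fun u => G.Adj v u)).card = S.card - 1 - R.degree v := by
      omega
    rw [this]
    exact Nat.mul_le_mul_right _ hbd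
  omega
end

section
/- Let G be a finite simple graph with m edges and maximum degree at most r, and let T be a cluster of G with red graph R and blue edge set B satisfying e(B) ≥ e(R). Then the folding G_T of G at T satisfies k_3(G_T) − k_3(G) ≥ Q(R), where Q(R) = (r + 1 − s)·e(R) + k_3(R) − Σ_{v ∈ S_T} C(d_R(v), 2) and s = |S_T|. Moreover G_T has at most m edges and maximum degree at most r. -/
open scoped Classical
open Finset

variable {V : Type} [Fintype V] [DecidableEq V]

set_option linter.unusedSectionVars false
set_option linter.unusedVariables false





lemma disjoint_T_S (G : SimpleGraph V) (T : Finset V) {v : V} (hv : v ∈ T) :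
    v ∉ commonNbrs G T := fun h => G.irrefl (mem_commonNbrs.1 h v hv)

lemma T_nonempty {G : SimpleGraph V} {r : ℕ} {T : Finset V} (hT : IsCluster G r T)
    (hTS : T.card + (commonNbrs G T).card = r + 1) : T.Nonempty := by
  rcases T.eq_empty_or_nonempty with h | h
  · exfalso
    have hV : (commonNbrs G T).Nonempty := by
      rw [← Finset.card_pos]
      have hc : T.card = 0 := by rw [h]; simp
      omega
    obtain ⟨x, -⟩ := hV
    have h1 : IsTightClique G r {x} := by
      constructor
      · intro a ha b hb hab
        simp_all
      · intro a ha b hb hab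
        simp only [Finset.mem_singleton] at ha hb; subst ha; subst hb; exact absurd rfl hab
    have h2 := hT.2 {x} h1 (by rw [h]; exact Finset.empty_subset _)
    rw [h] at h2
    simp at h2
  · exact h

lemma nbhd_of_mem_T {G : SimpleGraph V} {r : ℕ} {T : Finset V} (hT : IsCluster G r T)
    (hTS : T.card + (commonNbrs G T).card = r + 1) (hΔ : G.maxDegree ≤ r)
    {v : V} (hv : v ∈ T) : G.neighborFinset v = T.erase v ∪ commonNbrs G T := by
  have hsub : T.erase v ∪ commonNbrs G T ⊆ G.neighborFinset v := by
    intro u hu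
    rw [SimpleGraph.mem_neighborFinset]
    rcases Finset.mem_union.1 hu with h | h
    · exact hT.1.1 (Finset.mem_coe.2 hv) (Finset.mem_coe.2 (Finset.mem_of_mem_erase h))
        (fun he => (Finset.mem_erase.1 h).1 he.symm)
    · exact mem_commonNbrs.1 h v hv
  have hdisj : Disjoint (T.erase v) (commonNbrs G T) := by
    rw [Finset.disjoint_left]
    intro a ha
    exact disjoint_T_S G T (Finset.mem_of_mem_erase ha)
  have hcard : (T.erase v ∪ commonNbrs G T).card = r := by
    rw [Finset.card_union_of_disjoint hdisj, Finset.card_erase_of_mem hv]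
    have : 1 ≤ T.card := Finset.card_pos.2 ⟨v, hv⟩
    omega
  have hdeg : (G.neighborFinset v).card ≤ r :=
    le_trans (G.degree_le_maxDegree v) hΔ
  exact (Finset.eq_of_subset_of_card_le hsub (by omega)).symm

lemma adj_mem_T_mem_W {G : SimpleGraph V} {r : ℕ} {T : Finset V} (hT : IsCluster G r T)
    (hTS : T.card + (commonNbrs G T).card = r + 1) (hΔ : G.maxDegree ≤ r)
    {v u : V} (hv : v ∈ T) (h : G.Adj v u) : u ∈ T ∪ commonNbrs G T := by
  have := nbhd_of_mem_T hT hTS hΔ hv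
  have hu : u ∈ G.neighborFinset v := (SimpleGraph.mem_neighborFinset _ _ _).2 h
  rw [this] at hu
  rcases Finset.mem_union.1 hu with h1 | h1
  · exact Finset.mem_union.2 (Or.inl (Finset.mem_of_mem_erase h1))
  · exact Finset.mem_union.2 (Or.inr h1)

lemma adj_T_S {G : SimpleGraph V} {T : Finset V} {v u : V} (hv : v ∈ T)
    (hu : u ∈ commonNbrs G T) : G.Adj v u := mem_commonNbrs.1 hu v hv




lemma folding_adj_iff (G : SimpleGraph V) (T : Finset V) (u v : V) :
    (folding G T).Adj u v ↔
      (G.Adj u v ∧ ¬IsBlueEdge G T u v) ∨ (redGraph G (commonNbrs G T)).Adj u v := by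
  constructor
  · rintro ⟨h1, h2, h3⟩
    by_cases hG : G.Adj u v
    · exact Or.inl ⟨hG, h3⟩
    · rcases h2 with h | h
      · exact absurd h hG
      · exact Or.inr ⟨h.1, h.2, h1, hG⟩
  · rintro (⟨hG, hB⟩ | ⟨hu, hv, hne, hG⟩)
    · exact ⟨hG.ne, Or.inl hG, hB⟩
    · exact ⟨hne, Or.inr ⟨hu, hv⟩, fun hb => hG hb.1⟩

lemma folding_eq (G : SimpleGraph V) (T : Finset V) :
    folding G T = (G \ blueGraph G T) ⊔ redGraph G (commonNbrs G T) := by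
  ext u v
  rw [folding_adj_iff]
  simp only [SimpleGraph.sup_adj, SimpleGraph.sdiff_adj]
  rfl

lemma red_not_G {G : SimpleGraph V} {S : Finset V} {u v : V}
    (h : (redGraph G S).Adj u v) : ¬G.Adj u v := h.2.2.2

lemma blue_le_G (G : SimpleGraph V) (T : Finset V) : blueGraph G T ≤ G := fun _ _ h => h.1

/-- blue edge at a vertex of S -/
lemma blue_iff_of_mem_S {G : SimpleGraph V} {T : Finset V} {u v : V}
    (hu : u ∈ commonNbrs G T) :
    IsBlueEdge G T u v ↔ G.Adj u v ∧ v ∉ T ∪ commonNbrs G T := by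
  constructor
  · rintro ⟨hadj, h | h⟩
    · exact ⟨hadj, h.2⟩
    · exact absurd (Finset.mem_union.2 (Or.inr hu)) h.2
  · rintro ⟨hadj, hv⟩
    exact ⟨hadj, Or.inl ⟨hu, hv⟩⟩

lemma not_blue_of_mem_T {G : SimpleGraph V} {T : Finset V} {u v : V}
    (h : u ∈ T) : ¬IsBlueEdge G T u v := by
  rintro ⟨hadj, ⟨hu, -⟩ | ⟨-, hu⟩⟩
  · exact disjoint_T_S G T h hu
  · exact hu (Finset.mem_union.2 (Or.inl h))

lemma not_blue_of_both_W {G : SimpleGraph V} {T : Finset V} {u v : V}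
    (hu : u ∈ T ∪ commonNbrs G T) (hv : v ∈ T ∪ commonNbrs G T) :
    ¬IsBlueEdge G T u v := by
  rintro ⟨hadj, ⟨-, h⟩ | ⟨-, h⟩⟩
  · exact h hv
  · exact h hu

/-- `W = T ∪ S` is a clique in the folding. -/
lemma W_clique {G : SimpleGraph V} {r : ℕ} {T : Finset V} (hT : IsCluster G r T)
    {u v : V} (hu : u ∈ T ∪ commonNbrs G T) (hv : v ∈ T ∪ commonNbrs G T)
    (hne : u ≠ v) : (folding G T).Adj u v := by
  refine ⟨hne, ?_, not_blue_of_both_W hu hv⟩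
  rcases Finset.mem_union.1 hu with h1 | h1 <;> rcases Finset.mem_union.1 hv with h2 | h2
  · exact Or.inl (hT.1.1 (Finset.mem_coe.2 h1) (Finset.mem_coe.2 h2) hne)
  · exact Or.inl (adj_T_S h1 h2)
  · exact Or.inl (adj_T_S h2 h1).symm
  · exact Or.inr ⟨h1, h2⟩

lemma folding_degree_le {G : SimpleGraph V} {r : ℕ} {T : Finset V} (hT : IsCluster G r T)
    (hTS : T.card + (commonNbrs G T).card = r + 1) (hΔ : G.maxDegree ≤ r) (v : V) :
    (folding G T).degree v ≤ r := by
  set S := commonNbrs G T with hS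
  by_cases hvT : v ∈ T
  · -- neighborhood unchanged
    have : (folding G T).neighborFinset v = G.neighborFinset v := by
      ext u
      simp only [SimpleGraph.mem_neighborFinset, folding_adj_iff]
      constructor
      · rintro (⟨h, -⟩ | h)
        · exact h
        · exact absurd h.1 (disjoint_T_S G T hvT)
      · intro h
        exact Or.inl ⟨h, not_blue_of_mem_T hvT⟩
    rw [SimpleGraph.degree, this]
    exact le_trans (G.degree_le_maxDegree v) hΔ
  by_cases hvS : v ∈ S
  · -- neighborhood inside W \ {v}
    have hsub : (folding G T).neighborFinset v ⊆ (T ∪ S).erase v := by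
      intro u hu
      rw [SimpleGraph.mem_neighborFinset, folding_adj_iff] at hu
      rw [Finset.mem_erase]
      rcases hu with ⟨h, hb⟩ | h
      · refine ⟨fun he => G.irrefl (he ▸ h), ?_⟩
        by_contra hw
        exact hb ((blue_iff_of_mem_S hvS).2 ⟨h, hw⟩)
      · exact ⟨fun he => h.2.2.1 he.symm, Finset.mem_union.2 (Or.inr h.2.1)⟩
    calc (folding G T).degree v ≤ ((T ∪ S).erase v).card := Finset.card_le_card hsub
      _ ≤ (T ∪ S).card - 1 := by
          rw [Finset.card_erase_of_mem (Finset.mem_union.2 (Or.inr hvS))]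
      _ ≤ r := by
          have : (T ∪ S).card = T.card + S.card := Finset.card_union_of_disjoint
            (Finset.disjoint_left.2 fun a ha => disjoint_T_S G T ha)
          omega
  · -- outside W: neighborhood shrinks
    have hsub : (folding G T).neighborFinset v ⊆ G.neighborFinset v := by
      intro u hu
      rw [SimpleGraph.mem_neighborFinset, folding_adj_iff] at hu
      rw [SimpleGraph.mem_neighborFinset]
      rcases hu with ⟨h, -⟩ | h
      · exact h
      · exact absurd h.1 hvS
    calc (folding G T).degree v ≤ G.degree v := Finset.card_le_card hsub
      _ ≤ r := le_trans (G.degree_le_maxDegree v) hΔ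

lemma folding_maxDegree {G : SimpleGraph V} {r : ℕ} {T : Finset V} (hT : IsCluster G r T)
    (hTS : T.card + (commonNbrs G T).card = r + 1) (hΔ : G.maxDegree ≤ r) :
    (folding G T).maxDegree ≤ r :=
  SimpleGraph.maxDegree_le_of_forall_degree_le _ _ (folding_degree_le hT hTS hΔ)

lemma folding_edge_card {G : SimpleGraph V} {T : Finset V} :
    (folding G T).edgeFinset.card + (blueGraph G T).edgeFinset.card
      = G.edgeFinset.card + (redGraph G (commonNbrs G T)).edgeFinset.card := by
  have h1 : (folding G T).edgeFinset
      = (G.edgeFinset \ (blueGraph G T).edgeFinset) ∪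
        (redGraph G (commonNbrs G T)).edgeFinset := by
    ext e
    refine Sym2.ind (fun x y => ?_) e
    simp only [SimpleGraph.mem_edgeFinset, Finset.mem_union, Finset.mem_sdiff,
      SimpleGraph.mem_edgeSet]
    rw [folding_adj_iff]
    exact Iff.rfl
  have hdisj : Disjoint (G.edgeFinset \ (blueGraph G T).edgeFinset)
      (redGraph G (commonNbrs G T)).edgeFinset := by
    rw [Finset.disjoint_left]
    intro e he hr
    have heG : e ∈ G.edgeFinset := (Finset.mem_sdiff.1 he).1
    rw [SimpleGraph.mem_edgeFinset] at heG hr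
    induction e with
    | h x y => exact red_not_G hr heG
  have hBsub : (blueGraph G T).edgeFinset ⊆ G.edgeFinset :=
    SimpleGraph.edgeFinset_mono (blue_le_G G T)
  rw [h1, Finset.card_union_of_disjoint hdisj, Finset.card_sdiff_of_subset hBsub]
  have := Finset.card_le_card hBsub
  omega


lemma card_triple {x y z : V} (hxy : x ≠ y) (hxz : x ≠ z) (hyz : y ≠ z) :
    ({x, y, z} : Finset V).card = 3 := by
  rw [Finset.card_insert_of_notMem (by simp [hxy, hxz]),
    Finset.card_insert_of_notMem (by simp [hyz]), Finset.card_singleton]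

lemma count_pairs (W : Finset V) {x y : V} (hx : x ∈ W) (hy : y ∈ W) (hxy : x ≠ y) :
    W.card - 2 ≤ ((W.powersetCard 3).filter fun A => x ∈ A ∧ y ∈ A).card := by
  have himg : (W \ {x, y}).image (fun w => ({x, y, w} : Finset V)) ⊆
      (W.powersetCard 3).filter fun A => x ∈ A ∧ y ∈ A := by
    intro A hA
    obtain ⟨w, hw, rfl⟩ := Finset.mem_image.1 hA
    rw [Finset.mem_sdiff] at hw
    have hwx : x ≠ w := fun h => hw.2 (by simp [h])
    have hwy : y ≠ w := fun h => hw.2 (by simp [h])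
    rw [Finset.mem_filter, Finset.mem_powersetCard]
    refine ⟨⟨?_, card_triple hxy hwx hwy⟩, by simp, by simp⟩
    intro a ha
    simp only [Finset.mem_insert, Finset.mem_singleton] at ha
    rcases ha with rfl | rfl | rfl
    · exact hx
    · exact hy
    · exact hw.1
  have hinj : Set.InjOn (fun w => ({x, y, w} : Finset V)) ↑(W \ {x, y}) := by
    intro a ha b hb hab
    simp only [Finset.coe_sdiff, Set.mem_diff, Finset.mem_coe, Finset.coe_insert,
      Finset.coe_singleton, Set.mem_insert_iff, Set.mem_singleton_iff] at ha hb
    have : a ∈ ({x, y, b} : Finset V) := by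
      have h1 : ({x, y, a} : Finset V) = {x, y, b} := hab
      rw [← h1]; simp
    simp only [Finset.mem_insert, Finset.mem_singleton] at this
    rcases this with rfl | rfl | rfl
    · exact absurd (Or.inl rfl) ha.2
    · exact absurd (Or.inr rfl) ha.2
    · rfl
  calc W.card - 2 = (W \ {x, y}).card := by
        rw [Finset.card_sdiff_of_subset (Finset.insert_subset_iff.2 ⟨hx, Finset.singleton_subset_iff.2 hy⟩)]
        congr 1
        rw [Finset.card_insert_of_notMem (by simp [hxy]), Finset.card_singleton]
    _ = ((W \ {x, y}).image (fun w => ({x, y, w} : Finset V))).card :=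
        (Finset.card_image_of_injOn hinj).symm
    _ ≤ _ := Finset.card_le_card himg

lemma count_triple_le_one (W : Finset V) {x y z : V} (hxy : x ≠ y) (hxz : x ≠ z)
    (hyz : y ≠ z) :
    ((W.powersetCard 3).filter fun A => x ∈ A ∧ y ∈ A ∧ z ∈ A).card ≤ 1 := by
  rw [Finset.card_le_one]
  intro A hA B hB
  rw [Finset.mem_filter, Finset.mem_powersetCard] at hA hB
  have hA3 : A = {x, y, z} := by
    refine (Finset.eq_of_subset_of_card_le ?_ ?_).symm
    · intro a ha
      simp only [Finset.mem_insert, Finset.mem_singleton] at ha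
      rcases ha with rfl | rfl | rfl
      exacts [hA.2.1, hA.2.2.1, hA.2.2.2]
    · rw [hA.1.2, card_triple hxy hxz hyz]
  have hB3 : B = {x, y, z} := by
    refine (Finset.eq_of_subset_of_card_le ?_ ?_).symm
    · intro a ha
      simp only [Finset.mem_insert, Finset.mem_singleton] at ha
      rcases ha with rfl | rfl | rfl
      exacts [hB.2.1, hB.2.2.1, hB.2.2.2]
    · rw [hB.1.2, card_triple hxy hxz hyz]
  rw [hA3, hB3]

lemma count_triple_ge_one (W : Finset V) {x y z : V} (hx : x ∈ W) (hy : y ∈ W)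
    (hz : z ∈ W) (hxy : x ≠ y) (hxz : x ≠ z) (hyz : y ≠ z) :
    1 ≤ ((W.powersetCard 3).filter fun A => x ∈ A ∧ y ∈ A ∧ z ∈ A).card := by
  rw [Nat.succ_le_iff, Finset.card_pos]
  refine ⟨{x, y, z}, ?_⟩
  rw [Finset.mem_filter, Finset.mem_powersetCard]
  refine ⟨⟨?_, card_triple hxy hxz hyz⟩, by simp, by simp, by simp⟩
  intro a ha
  simp only [Finset.mem_insert, Finset.mem_singleton] at ha
  rcases ha with rfl | rfl | rfl
  exacts [hx, hy, hz]

noncomputable def pA (R : SimpleGraph V) (A : Finset V) : ℕ :=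
  ∑ x, ∑ y, if x ∈ A ∧ y ∈ A ∧ R.Adj x y then 1 else 0

noncomputable def cA (R : SimpleGraph V) (A : Finset V) : ℕ :=
  ∑ x, ∑ y, ∑ z, if x ∈ A ∧ y ∈ A ∧ z ∈ A ∧ y ≠ z ∧ R.Adj x y ∧ R.Adj x z then 1 else 0

noncomputable def tA (R : SimpleGraph V) (A : Finset V) : ℕ :=
  ∑ x, ∑ y, ∑ z, if x ∈ A ∧ y ∈ A ∧ z ∈ A ∧ R.Adj x y ∧ R.Adj y z ∧ R.Adj x z then 1 else 0

lemma sum_pA (R : SimpleGraph V) (W : Finset V) (hRW : ∀ x y, R.Adj x y → x ∈ W) :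
    2 * R.edgeFinset.card * (W.card - 2) ≤ ∑ A ∈ W.powersetCard 3, pA R A := by
  have swap : ∑ A ∈ W.powersetCard 3, pA R A
      = ∑ x, ∑ y, ∑ A ∈ W.powersetCard 3, if x ∈ A ∧ y ∈ A ∧ R.Adj x y then 1 else 0 := by
    unfold pA
    rw [Finset.sum_comm]
    exact Finset.sum_congr rfl fun x _ => Finset.sum_comm
  rw [swap]
  have step : ∀ x y : V, (if R.Adj x y then W.card - 2 else 0)
      ≤ ∑ A ∈ W.powersetCard 3, if x ∈ A ∧ y ∈ A ∧ R.Adj x y then 1 else 0 := by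
    intro x y
    by_cases hadj : R.Adj x y
    · simp only [hadj, if_true, and_true]
      rw [← Finset.card_filter]
      exact count_pairs W (hRW x y hadj) (hRW y x hadj.symm) hadj.ne
    · simp [hadj]
  calc 2 * R.edgeFinset.card * (W.card - 2)
      = ∑ x, ∑ y, (if R.Adj x y then W.card - 2 else 0) := by
        have h1 : ∀ x : V, ∑ y, (if R.Adj x y then W.card - 2 else 0)
            = R.degree x * (W.card - 2) := by
          intro x
          rw [← Finset.sum_filter, Finset.sum_const, smul_eq_mul]
          congr 1
          rw [SimpleGraph.degree, SimpleGraph.neighborFinset_eq_filter]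
        rw [Finset.sum_congr rfl fun x _ => h1 x, ← Finset.sum_mul,
          SimpleGraph.sum_degrees_eq_twice_card_edges]
    _ ≤ _ := Finset.sum_le_sum fun x _ => Finset.sum_le_sum fun y _ => step x y

lemma two_mul_choose_two (n : ℕ) : 2 * n.choose 2 = n * (n - 1) := by
  rcases n with _ | m
  · simp
  · rw [Nat.choose_two_right, Nat.succ_sub_one]
    have he : Even ((m + 1) * m) := by
      rw [mul_comm]; exact Nat.even_mul_succ_self m
    obtain ⟨k, hk⟩ := he
    omega

lemma red_degree_zero_of_not_mem {G : SimpleGraph V} {S : Finset V} {x : V}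
    (hx : x ∉ S) : (redGraph G S).degree x = 0 := by
  rw [SimpleGraph.degree, Finset.card_eq_zero, SimpleGraph.neighborFinset_eq_filter,
    Finset.filter_eq_empty_iff]
  intro y _
  exact fun h => hx h.1

lemma sum_cA (R : SimpleGraph V) (W : Finset V) :
    ∑ A ∈ W.powersetCard 3, cA R A ≤ ∑ x, R.degree x * (R.degree x - 1) := by
  have swap : ∑ A ∈ W.powersetCard 3, cA R A
      = ∑ x, ∑ y, ∑ z, ∑ A ∈ W.powersetCard 3,
        if x ∈ A ∧ y ∈ A ∧ z ∈ A ∧ y ≠ z ∧ R.Adj x y ∧ R.Adj x z then 1 else 0 := by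
    unfold cA
    rw [Finset.sum_comm]
    refine Finset.sum_congr rfl fun x _ => ?_
    rw [Finset.sum_comm]
    exact Finset.sum_congr rfl fun y _ => Finset.sum_comm
  rw [swap]
  have step : ∀ x y z : V, (∑ A ∈ W.powersetCard 3,
        if x ∈ A ∧ y ∈ A ∧ z ∈ A ∧ y ≠ z ∧ R.Adj x y ∧ R.Adj x z then 1 else 0)
      ≤ if y ≠ z ∧ R.Adj x y ∧ R.Adj x z then 1 else 0 := by
    intro x y z
    by_cases hc : y ≠ z ∧ R.Adj x y ∧ R.Adj x z
    · rw [if_pos hc]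
      have hrw : ∀ A : Finset V,
          (if x ∈ A ∧ y ∈ A ∧ z ∈ A ∧ y ≠ z ∧ R.Adj x y ∧ R.Adj x z then 1 else 0)
          = (if x ∈ A ∧ y ∈ A ∧ z ∈ A then (1:ℕ) else 0) := fun A => by
        simp [hc.1, hc.2.1, hc.2.2]
      rw [Finset.sum_congr rfl fun A _ => hrw A, ← Finset.card_filter]
      exact count_triple_le_one W hc.2.1.ne hc.2.2.ne hc.1
    · refine le_trans (le_of_eq (Finset.sum_eq_zero fun A _ => ?_)) (Nat.zero_le _)
      rw [if_neg]
      tauto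
  refine le_trans (Finset.sum_le_sum fun x _ => Finset.sum_le_sum fun y _ =>
    Finset.sum_le_sum fun z _ => step x y z) ?_
  refine Finset.sum_le_sum fun x _ => ?_
  have inner : ∀ y : V, (∑ z, if y ≠ z ∧ R.Adj x y ∧ R.Adj x z then 1 else 0)
      = if R.Adj x y then ((R.neighborFinset x).erase y).card else 0 := by
    intro y
    by_cases hy : R.Adj x y
    · rw [if_pos hy]
      have he : (R.neighborFinset x).erase y
          = Finset.univ.filter fun z => y ≠ z ∧ R.Adj x y ∧ R.Adj x z := by
        ext z
        simp only [Finset.mem_erase, SimpleGraph.mem_neighborFinset, Finset.mem_filter,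
          Finset.mem_univ, true_and, hy, and_true]
        exact ⟨fun h => ⟨Ne.symm h.1, h.2⟩, fun h => ⟨Ne.symm h.1, h.2⟩⟩
      rw [he, Finset.card_filter]
    · simp [hy]
  rw [Finset.sum_congr rfl fun y _ => inner y]
  have inner2 : ∀ y : V, (if R.Adj x y then ((R.neighborFinset x).erase y).card else 0)
      = if R.Adj x y then R.degree x - 1 else 0 := by
    intro y
    by_cases hy : R.Adj x y
    · rw [if_pos hy, if_pos hy,
        Finset.card_erase_of_mem ((SimpleGraph.mem_neighborFinset _ _ _).2 hy)]
      rfl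
    · simp [hy]
  rw [Finset.sum_congr rfl fun y _ => inner2 y, ← Finset.sum_filter, Finset.sum_const,
    smul_eq_mul]
  have : (Finset.univ.filter fun y => R.Adj x y).card = R.degree x := by
    rw [SimpleGraph.degree, SimpleGraph.neighborFinset_eq_filter]
  rw [this, mul_comm]

lemma triple_is3Clique {R : SimpleGraph V} {x y z : V} (h1 : R.Adj x y) (h2 : R.Adj y z)
    (h3 : R.Adj x z) : R.IsNClique 3 {x, y, z} := by
  constructor
  · intro a ha b hb hne
    simp only [Finset.coe_insert, Set.mem_insert_iff, Finset.coe_singleton,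
      Set.mem_singleton_iff] at ha hb
    rcases ha with rfl | rfl | rfl <;> rcases hb with rfl | rfl | rfl <;>
      first
        | exact absurd rfl hne
        | assumption
        | exact h1.symm
        | exact h2.symm
        | exact h3.symm
  · exact card_triple h1.ne h3.ne h2.ne

lemma ordered_triangles (R : SimpleGraph V) :
    6 * (R.cliqueFinset 3).card
      ≤ ∑ x, ∑ y, ∑ z, if R.Adj x y ∧ R.Adj y z ∧ R.Adj x z then 1 else 0 := by
  classical
  set OT : Finset (V × V × V) :=
    (Finset.univ ×ˢ Finset.univ ×ˢ Finset.univ).filter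
      fun p => R.Adj p.1 p.2.1 ∧ R.Adj p.2.1 p.2.2 ∧ R.Adj p.1 p.2.2 with hOT
  have hsum : (∑ x, ∑ y, ∑ z, if R.Adj x y ∧ R.Adj y z ∧ R.Adj x z then 1 else 0)
      = OT.card := by
    rw [hOT, Finset.card_filter, Finset.sum_product]
    refine Finset.sum_congr rfl fun x _ => ?_
    rw [Finset.sum_product]
  rw [hsum]
  have hmap : ∀ p ∈ OT, ({p.1, p.2.1, p.2.2} : Finset V) ∈ R.cliqueFinset 3 := by
    intro p hp
    rw [hOT, Finset.mem_filter] at hp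
    exact SimpleGraph.mem_cliqueFinset_iff.2 (triple_is3Clique hp.2.1 hp.2.2.1 hp.2.2.2)
  rw [Finset.card_eq_sum_card_fiberwise hmap, mul_comm 6 _, ← smul_eq_mul,
    ← Finset.sum_const]
  refine Finset.sum_le_sum fun B hB => ?_
  rw [SimpleGraph.mem_cliqueFinset_iff, SimpleGraph.isNClique_iff] at hB
  obtain ⟨u, v, w, huv, huw, hvw, rfl⟩ := Finset.card_eq_three.1 hB.2
  have hmem : ∀ a ∈ ({u, v, w} : Finset V), (a : V) ∈ (↑({u, v, w} : Finset V) : Set V) :=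
    fun a ha => Finset.mem_coe.2 ha
  have auv : R.Adj u v := hB.1 (by simp) (by simp) huv
  have auw : R.Adj u w := hB.1 (by simp) (by simp) huw
  have avw : R.Adj v w := hB.1 (by simp) (by simp) hvw
  set L : Finset (V × V × V) :=
    {(u, v, w), (u, w, v), (v, u, w), (v, w, u), (w, u, v), (w, v, u)} with hL
  have hLsub : L ⊆ OT.filter fun p => ({p.1, p.2.1, p.2.2} : Finset V) = {u, v, w} := by
    intro p hp
    rw [hL] at hp
    simp only [Finset.mem_insert, Finset.mem_singleton] at hp
    rw [Finset.mem_filter, hOT, Finset.mem_filter]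
    have hset : ∀ a b c : V, ({a, b, c} : Finset V) = {b, a, c} := fun a b c => by
      ext t; simp only [Finset.mem_insert, Finset.mem_singleton]; tauto
    have hset2 : ∀ a b c : V, ({a, b, c} : Finset V) = {a, c, b} := fun a b c => by
      ext t; simp only [Finset.mem_insert, Finset.mem_singleton]; tauto
    rcases hp with rfl | rfl | rfl | rfl | rfl | rfl <;>
      refine ⟨⟨by simp, ?_, ?_, ?_⟩, ?_⟩ <;>
      first
        | assumption
        | exact auv.symm
        | exact auw.symm
        | exact avw.symm
        | rfl
        | (first
            | exact hset2 u v w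
            | exact (hset u v w).symm ▸ rfl
            | (ext t; simp only [Finset.mem_insert, Finset.mem_singleton]; tauto))
  have hLcard : L.card = 6 := by
    rw [hL]
    rw [Finset.card_insert_of_notMem (by
        simp [Prod.ext_iff, huv, huw, hvw, huv.symm, huw.symm, hvw.symm]),
      Finset.card_insert_of_notMem (by
        simp [Prod.ext_iff, huv, huw, hvw, huv.symm, huw.symm, hvw.symm]),
      Finset.card_insert_of_notMem (by
        simp [Prod.ext_iff, huv, huw, hvw, huv.symm, huw.symm, hvw.symm]),
      Finset.card_insert_of_notMem (by
        simp [Prod.ext_iff, huv, huw, hvw, huv.symm, huw.symm, hvw.symm]),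
      Finset.card_insert_of_notMem (by
        simp [Prod.ext_iff, huv, huw, hvw, huv.symm, huw.symm, hvw.symm]),
      Finset.card_singleton]
  calc (6 : ℕ) = L.card := hLcard.symm
    _ ≤ _ := Finset.card_le_card hLsub

lemma sum_tA (R : SimpleGraph V) (W : Finset V) (hRW : ∀ x y, R.Adj x y → x ∈ W) :
    6 * (R.cliqueFinset 3).card ≤ ∑ A ∈ W.powersetCard 3, tA R A := by
  have swap : ∑ A ∈ W.powersetCard 3, tA R A
      = ∑ x, ∑ y, ∑ z, ∑ A ∈ W.powersetCard 3,
        if x ∈ A ∧ y ∈ A ∧ z ∈ A ∧ R.Adj x y ∧ R.Adj y z ∧ R.Adj x z then 1 else 0 := by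
    unfold tA
    rw [Finset.sum_comm]
    refine Finset.sum_congr rfl fun x _ => ?_
    rw [Finset.sum_comm]
    exact Finset.sum_congr rfl fun y _ => Finset.sum_comm
  rw [swap]
  refine le_trans (ordered_triangles R) (Finset.sum_le_sum fun x _ =>
    Finset.sum_le_sum fun y _ => Finset.sum_le_sum fun z _ => ?_)
  by_cases hc : R.Adj x y ∧ R.Adj y z ∧ R.Adj x z
  · rw [if_pos hc]
    have hrw : ∀ A : Finset V,
        (if x ∈ A ∧ y ∈ A ∧ z ∈ A ∧ R.Adj x y ∧ R.Adj y z ∧ R.Adj x z then 1 else 0)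
        = (if x ∈ A ∧ y ∈ A ∧ z ∈ A then (1:ℕ) else 0) := fun A => by
      simp [hc.1, hc.2.1, hc.2.2]
    rw [Finset.sum_congr rfl fun A _ => hrw A, ← Finset.card_filter]
    exact count_triple_ge_one W (hRW x y hc.1) (hRW y z hc.2.1) (hRW z y hc.2.1.symm)
      hc.1.ne hc.2.2.ne hc.2.1.ne
  · rw [if_neg hc]
    exact Nat.zero_le _

lemma pointwise_ineq (R : SimpleGraph V) {A : Finset V} (hA : A.card = 3) :
    3 * pA R A + tA R A
      ≤ 6 * (if ∃ x ∈ A, ∃ y ∈ A, R.Adj x y then 1 else 0) + 3 * cA R A := by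
  obtain ⟨u, v, w, huv, huw, hvw, rfl⟩ := Finset.card_eq_three.1 hA
  have expand : ∀ f : V → ℕ, ∑ x ∈ ({u, v, w} : Finset V), f x = f u + f v + f w := by
    intro f
    rw [Finset.sum_insert (by simp [huv, huw]), Finset.sum_insert (by simp [hvw]),
      Finset.sum_singleton, Nat.add_assoc]
  unfold pA cA tA
  simp only [ite_and, Finset.sum_ite_irrel, Finset.sum_const_zero, Finset.sum_ite_mem,
    Finset.univ_inter, expand]
  have hba := R.adj_comm v u
  have hca := R.adj_comm w u
  have hcb := R.adj_comm w v
  have hirr : ∀ x : V, ¬R.Adj x x := fun x => R.irrefl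
  by_cases hab : R.Adj u v <;> by_cases hac : R.Adj u w <;> by_cases hbc : R.Adj v w <;>
    simp [hab, hac, hbc, hba, hca, hcb, hirr, huv, huw, hvw, huv.symm, huw.symm, hvw.symm,
      Finset.mem_insert, Finset.mem_singleton] <;> omega

lemma W_card {G : SimpleGraph V} {r : ℕ} {T : Finset V}
    (hTS : T.card + (commonNbrs G T).card = r + 1) :
    (T ∪ commonNbrs G T).card = r + 1 := by
  rw [Finset.card_union_of_disjoint
    (Finset.disjoint_left.2 fun a ha => disjoint_T_S G T ha)]
  exact hTS

lemma k3_zero_of_no_edges {R : SimpleGraph V} (he : R.edgeFinset.card = 0) :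
    (R.cliqueFinset 3).card = 0 := by
  rw [Finset.card_eq_zero] at he ⊢
  rw [Finset.eq_empty_iff_forall_notMem]
  intro B hB
  rw [SimpleGraph.mem_cliqueFinset_iff, SimpleGraph.isNClique_iff] at hB
  obtain ⟨x, hx, y, hy, hxy⟩ := Finset.one_lt_card.1 (by omega : 1 < B.card)
  have hadj : R.Adj x y := hB.1 (Finset.mem_coe.2 hx) (Finset.mem_coe.2 hy) hxy
  have : s(x, y) ∈ R.edgeFinset := SimpleGraph.mem_edgeFinset.2 hadj
  rw [he] at this
  exact absurd this (Finset.notMem_empty _)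

lemma r_ge_two {G : SimpleGraph V} {r : ℕ} {T : Finset V} (hT : IsCluster G r T)
    (hTS : T.card + (commonNbrs G T).card = r + 1)
    (he : (redGraph G (commonNbrs G T)).edgeFinset.card ≠ 0) : 2 ≤ r := by
  obtain ⟨e, heM⟩ := Finset.card_pos.1 (Nat.pos_of_ne_zero he)
  have hS : 2 ≤ (commonNbrs G T).card := by
    induction e with
    | h x y =>
      rw [SimpleGraph.mem_edgeFinset, SimpleGraph.mem_edgeSet] at heM
      exact Finset.one_lt_card.2 ⟨x, heM.1, y, heM.2.1, heM.2.2.1⟩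
  have hTne : 1 ≤ T.card := Finset.card_pos.2 (T_nonempty hT hTS)
  omega

lemma choose_sum_eq {G : SimpleGraph V} (S : Finset V) :
    ∑ x, (redGraph G S).degree x * ((redGraph G S).degree x - 1)
      = 2 * ∑ v ∈ S, ((redGraph G S).degree v).choose 2 := by
  rw [Finset.mul_sum]
  rw [← Finset.sum_subset (Finset.subset_univ S) (fun x _ hx => by
    rw [red_degree_zero_of_not_mem hx]; rfl)]
  exact Finset.sum_congr rfl fun x _ => (two_mul_choose_two _).symm

lemma new_bound (G : SimpleGraph V) (r : ℕ) (T : Finset V) (hT : IsCluster G r T)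
    (hTS : T.card + (commonNbrs G T).card = r + 1) :
    ((redGraph G (commonNbrs G T)).edgeFinset.card : ℤ) * ((r : ℤ) - 1)
      + (((redGraph G (commonNbrs G T)).cliqueFinset 3).card : ℤ)
      - ∑ v ∈ commonNbrs G T, (((redGraph G (commonNbrs G T)).degree v).choose 2 : ℤ)
    ≤ ((((T ∪ commonNbrs G T).powersetCard 3).filter
        fun A => ∃ x ∈ A, ∃ y ∈ A, (redGraph G (commonNbrs G T)).Adj x y).card : ℤ) := by
  set S := commonNbrs G T with hS
  set R := redGraph G S with hR
  set W := T ∪ S with hW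
  have hRW : ∀ x y, R.Adj x y → x ∈ W := fun x y h =>
    Finset.mem_union.2 (Or.inr h.1)
  -- main combined inequality over P3
  have hmain : 3 * (∑ A ∈ W.powersetCard 3, pA R A) + (∑ A ∈ W.powersetCard 3, tA R A)
      ≤ 6 * (((W.powersetCard 3).filter
          fun A => ∃ x ∈ A, ∃ y ∈ A, R.Adj x y).card)
        + 3 * (∑ A ∈ W.powersetCard 3, cA R A) := by
    rw [Finset.card_filter, Finset.mul_sum, Finset.mul_sum, Finset.mul_sum,
      ← Finset.sum_add_distrib, ← Finset.sum_add_distrib]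
    refine Finset.sum_le_sum fun A hA => ?_
    exact pointwise_ineq R (Finset.mem_powersetCard.1 hA).2
  have hp := sum_pA R W hRW
  have hc := le_trans (sum_cA R W) (le_of_eq (choose_sum_eq S))
  have ht := sum_tA R W hRW
  -- case split on whether R has edges
  by_cases he : R.edgeFinset.card = 0
  · rw [he, k3_zero_of_no_edges he]
    push_cast
    have : (0 : ℤ) ≤ ∑ v ∈ S, (((R.degree v).choose 2 : ℕ) : ℤ) :=
      Finset.sum_nonneg fun v _ => Int.natCast_nonneg _
    have h0 : (0 : ℤ) ≤ ((((W.powersetCard 3).filter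
        fun A => ∃ x ∈ A, ∃ y ∈ A, R.Adj x y).card : ℕ) : ℤ) := Int.natCast_nonneg _
    linarith
  · have hr2 : 2 ≤ r := r_ge_two hT hTS he
    have hWc : W.card = r + 1 := W_card hTS
    have hWc2 : W.card - 2 = r - 1 := by omega
    rw [hWc2] at hp
    -- cast everything to ℤ
    have hpz : (2 : ℤ) * R.edgeFinset.card * ((r : ℤ) - 1)
        ≤ (∑ A ∈ W.powersetCard 3, pA R A : ℕ) := by
      calc (2 : ℤ) * R.edgeFinset.card * ((r : ℤ) - 1)
          = ((2 * R.edgeFinset.card * (r - 1) : ℕ) : ℤ) := by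
            push_cast [Nat.cast_sub (by omega : 1 ≤ r)]
            ring
        _ ≤ _ := Int.ofNat_le.2 hp
    have hcz : ((∑ A ∈ W.powersetCard 3, cA R A : ℕ) : ℤ)
        ≤ 2 * ∑ v ∈ S, (((R.degree v).choose 2 : ℕ) : ℤ) := by
      calc ((∑ A ∈ W.powersetCard 3, cA R A : ℕ) : ℤ)
          ≤ ((2 * ∑ v ∈ S, ((R.degree v).choose 2) : ℕ) : ℤ) := Int.ofNat_le.2 hc
        _ = _ := by push_cast; ring
    have htz : (6 : ℤ) * ((R.cliqueFinset 3).card : ℤ)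
        ≤ ((∑ A ∈ W.powersetCard 3, tA R A : ℕ) : ℤ) := by
      calc (6 : ℤ) * ((R.cliqueFinset 3).card : ℤ)
          = ((6 * (R.cliqueFinset 3).card : ℕ) : ℤ) := by push_cast; ring
        _ ≤ _ := Int.ofNat_le.2 ht
    have hmz : 3 * ((∑ A ∈ W.powersetCard 3, pA R A : ℕ) : ℤ)
        + ((∑ A ∈ W.powersetCard 3, tA R A : ℕ) : ℤ)
        ≤ 6 * ((((W.powersetCard 3).filter
            fun A => ∃ x ∈ A, ∃ y ∈ A, R.Adj x y).card : ℕ) : ℤ)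
          + 3 * ((∑ A ∈ W.powersetCard 3, cA R A : ℕ) : ℤ) := by
      have := Int.ofNat_le.2 hmain
      push_cast at this ⊢
      linarith
    linarith

/-- Every destroyed triangle contains at least two (S-rooted) blue pairs. -/
lemma destroyed_two_blue {G : SimpleGraph V} {r : ℕ} {T : Finset V} (hT : IsCluster G r T)
    (hTS : T.card + (commonNbrs G T).card = r + 1) (hΔ : G.maxDegree ≤ r)
    {A : Finset V} (hG3 : A ∈ G.cliqueFinset 3)
    (hF3 : A ∉ (folding G T).cliqueFinset 3) :
    2 ≤ ((Finset.univ ×ˢ Finset.univ).filter fun p : V × V =>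
      p.1 ∈ commonNbrs G T ∧ IsBlueEdge G T p.1 p.2 ∧ p.1 ∈ A ∧ p.2 ∈ A).card := by
  set S := commonNbrs G T with hS
  rw [SimpleGraph.mem_cliqueFinset_iff, SimpleGraph.isNClique_iff] at hG3
  have hcard : A.card = 3 := hG3.2
  -- find a non-folding-adjacent pair
  have hnc : ¬(folding G T).IsClique ↑A := by
    intro hcl
    exact hF3 (SimpleGraph.mem_cliqueFinset_iff.2 ⟨hcl, hcard⟩)
  rw [SimpleGraph.isClique_iff, Set.Pairwise] at hnc
  push_neg at hnc
  obtain ⟨x, hx, y, hy, hxy, hnadj⟩ := hnc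
  rw [Finset.mem_coe] at hx hy
  have hGxy : G.Adj x y := hG3.1 (Finset.mem_coe.2 hx) (Finset.mem_coe.2 hy) hxy
  have hblue : IsBlueEdge G T x y := by
    by_contra hb
    exact hnadj ((folding_adj_iff G T x y).2 (Or.inl ⟨hGxy, hb⟩))
  -- wlog the S endpoint is the first one
  have aux : ∀ x y : V, x ∈ A → y ∈ A → G.Adj x y → IsBlueEdge G T x y →
      x ∈ S → y ∉ T ∪ S →
      2 ≤ ((Finset.univ ×ˢ Finset.univ).filter fun p : V × V =>
        p.1 ∈ S ∧ IsBlueEdge G T p.1 p.2 ∧ p.1 ∈ A ∧ p.2 ∈ A).card := by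
    clear hx hy hxy hGxy hblue hnadj x y
    intro x y hx hy hGxy hblue hxS hyW
    have hxyne : x ≠ y := hGxy.ne
    -- third vertex
    have hns : ¬A ⊆ ({x, y} : Finset V) := by
      intro hsub
      have h2 : ({x, y} : Finset V).card ≤ 2 := Finset.card_insert_le _ _ |>.trans (by simp)
      have := Finset.card_le_card hsub
      omega
    obtain ⟨z, hzA, hz⟩ := Finset.not_subset.1 hns
    have hzx : z ≠ x := fun h => hz (by simp [h])
    have hzy : z ≠ y := fun h => hz (by simp [h])
    have hGxz : G.Adj x z := hG3.1 (Finset.mem_coe.2 hx) (Finset.mem_coe.2 hzA) hzx.symm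
    have hGyz : G.Adj y z := hG3.1 (Finset.mem_coe.2 hy) (Finset.mem_coe.2 hzA) hzy.symm
    have hzT : z ∉ T := by
      intro hzT
      exact hyW (adj_mem_T_mem_W hT hTS hΔ hzT hGyz.symm)
    show 1 < _
    rw [Finset.one_lt_card]
    by_cases hzS : z ∈ S
    · refine ⟨(x, y), ?_, (z, y), ?_, ?_⟩
      · rw [Finset.mem_filter]
        exact ⟨Finset.mem_product.2 ⟨Finset.mem_univ _, Finset.mem_univ _⟩,
          hxS, hblue, hx, hy⟩
      · rw [Finset.mem_filter]
        refine ⟨Finset.mem_product.2 ⟨Finset.mem_univ _, Finset.mem_univ _⟩,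
          hzS, (blue_iff_of_mem_S hzS).2 ⟨hGyz.symm, hyW⟩, hzA, hy⟩
      · intro h
        exact hzx (congrArg Prod.fst h).symm
    · have hzW : z ∉ T ∪ S := fun h => (Finset.mem_union.1 h).elim hzT hzS
      refine ⟨(x, y), ?_, (x, z), ?_, ?_⟩
      · rw [Finset.mem_filter]
        exact ⟨Finset.mem_product.2 ⟨Finset.mem_univ _, Finset.mem_univ _⟩,
          hxS, hblue, hx, hy⟩
      · rw [Finset.mem_filter]
        exact ⟨Finset.mem_product.2 ⟨Finset.mem_univ _, Finset.mem_univ _⟩,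
          hxS, (blue_iff_of_mem_S hxS).2 ⟨hGxz, hzW⟩, hx, hzA⟩
      · intro h
        exact hzy ((congrArg Prod.snd h)).symm
  rcases hblue.2 with ⟨h1, h2⟩ | ⟨h1, h2⟩
  · exact aux x y hx hy hGxy hblue h1 h2
  · exact aux y x hy hx hGxy.symm (blue_symm hblue) h1 h2

/-- Fiber bound: triangles of `G` through a fixed blue edge. -/
lemma fiber_bound {G : SimpleGraph V} {r : ℕ} {T : Finset V} (hT : IsCluster G r T)
    (hTS : T.card + (commonNbrs G T).card = r + 1) (hΔ : G.maxDegree ≤ r)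
    {u v : V} (hu : u ∈ commonNbrs G T) (hblue : IsBlueEdge G T u v)
    (D : Finset (Finset V)) (hD : D ⊆ G.cliqueFinset 3) :
    (D.filter fun A => u ∈ A ∧ v ∈ A).card ≤ (commonNbrs G T).card - 2 := by
  set S := commonNbrs G T with hS
  have hv : v ∉ T ∪ S := ((blue_iff_of_mem_S hu).1 hblue).2
  have hvT : v ∉ T := fun h => hv (Finset.mem_union.2 (Or.inl h))
  have huv : u ≠ v := hblue.1.ne
  set N : Finset V := G.neighborFinset u \ (T ∪ {v}) with hN
  have hsub : (D.filter fun A => u ∈ A ∧ v ∈ A) ⊆ N.image fun w => {u, v, w} := by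
    intro A hA
    rw [Finset.mem_filter] at hA
    obtain ⟨hAD, huA, hvA⟩ := hA
    have hG3 := SimpleGraph.mem_cliqueFinset_iff.1 (hD hAD)
    rw [SimpleGraph.isNClique_iff] at hG3
    have hns : ¬A ⊆ ({u, v} : Finset V) := by
      intro hsub
      have h2 : ({u, v} : Finset V).card ≤ 2 := Finset.card_insert_le _ _ |>.trans (by simp)
      have := Finset.card_le_card hsub
      omega
    obtain ⟨z, hzA, hz⟩ := Finset.not_subset.1 hns
    have hzu : z ≠ u := fun h => hz (by simp [h])
    have hzv : z ≠ v := fun h => hz (by simp [h])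
    have hGuz : G.Adj u z := hG3.1 (Finset.mem_coe.2 huA) (Finset.mem_coe.2 hzA) hzu.symm
    have hGvz : G.Adj v z := hG3.1 (Finset.mem_coe.2 hvA) (Finset.mem_coe.2 hzA) hzv.symm
    have hzT : z ∉ T := by
      intro hzT
      exact hv (adj_mem_T_mem_W hT hTS hΔ hzT hGvz.symm)
    have hzN : z ∈ N := by
      rw [hN, Finset.mem_sdiff, SimpleGraph.mem_neighborFinset]
      refine ⟨hGuz, ?_⟩
      intro hmem
      rcases Finset.mem_union.1 hmem with h | h
      · exact hzT h
      · exact hzv (Finset.mem_singleton.1 h)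
    rw [Finset.mem_image]
    refine ⟨z, hzN, ?_⟩
    refine Finset.eq_of_subset_of_card_le ?_ ?_
    · intro a ha
      simp only [Finset.mem_insert, Finset.mem_singleton] at ha
      rcases ha with rfl | rfl | rfl
      exacts [huA, hvA, hzA]
    · rw [hG3.2, card_triple huv (Ne.symm hzu) (Ne.symm hzv)]
  have hNcard : N.card + (T.card + 1) = G.degree u := by
    have hTsub : T ∪ {v} ⊆ G.neighborFinset u := by
      intro a ha
      rw [SimpleGraph.mem_neighborFinset]
      rcases Finset.mem_union.1 ha with h | h
      · exact (adj_T_S h hu).symm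
      · rw [Finset.mem_singleton.1 h]; exact hblue.1
    have := Finset.card_sdiff_add_card_eq_card hTsub
    rw [hN]
    rw [Finset.card_union_of_disjoint (by
      rw [Finset.disjoint_left]; intro a ha hs; rw [Finset.mem_singleton] at hs
      exact hvT (hs ▸ ha)), Finset.card_singleton] at this
    exact this
  have hdeg : G.degree u ≤ r := le_trans (G.degree_le_maxDegree u) hΔ
  calc (D.filter fun A => u ∈ A ∧ v ∈ A).card
      ≤ (N.image fun w => {u, v, w}).card := Finset.card_le_card hsub
    _ ≤ N.card := Finset.card_image_le
    _ ≤ S.card - 2 := by omega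

/-- the number of blue neighbours of `u ∈ S` is at most its red degree. -/
lemma blue_nbrs_le {G : SimpleGraph V} {r : ℕ} {T : Finset V} (hT : IsCluster G r T)
    (hTS : T.card + (commonNbrs G T).card = r + 1) (hΔ : G.maxDegree ≤ r)
    {u : V} (hu : u ∈ commonNbrs G T) :
    (Finset.univ.filter fun v => IsBlueEdge G T u v).card
      ≤ (redGraph G (commonNbrs G T)).degree u := by
  set S := commonNbrs G T with hS
  set R := redGraph G S with hR
  have hBu : (Finset.univ.filter fun v => IsBlueEdge G T u v)
      = (G.neighborFinset u).filter fun v => v ∉ T ∪ S := by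
    ext v
    simp only [Finset.mem_filter, Finset.mem_univ, true_and, SimpleGraph.mem_neighborFinset]
    exact blue_iff_of_mem_S hu
  have hsplit : ((G.neighborFinset u).filter fun v => v ∈ T ∪ S).card
      + ((G.neighborFinset u).filter fun v => v ∉ T ∪ S).card = G.degree u :=
    Finset.card_filter_add_card_filter_not _
  have hW : (G.neighborFinset u).filter (fun v => v ∈ T ∪ S)
      = T ∪ ((G.neighborFinset u).filter fun v => v ∈ S) := by
    ext a
    simp only [Finset.mem_filter, SimpleGraph.mem_neighborFinset, Finset.mem_union]
    constructor
    · rintro ⟨ha, h | h⟩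
      · exact Or.inl h
      · exact Or.inr ⟨ha, h⟩
    · rintro (h | ⟨ha, h⟩)
      · exact ⟨(adj_T_S h hu).symm, Or.inl h⟩
      · exact ⟨ha, Or.inr h⟩
  have hWc : ((G.neighborFinset u).filter fun v => v ∈ T ∪ S).card
      = T.card + ((G.neighborFinset u).filter fun v => v ∈ S).card := by
    rw [hW, Finset.card_union_of_disjoint]
    rw [Finset.disjoint_left]
    intro a ha h
    exact disjoint_T_S G T ha (Finset.mem_filter.1 h).2
  -- split S.erase u into G-neighbours and red neighbours
  have hSsplit : ((S.erase u).filter fun w => G.Adj u w).card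
      + ((S.erase u).filter fun w => ¬G.Adj u w).card = S.card - 1 := by
    rw [Finset.card_filter_add_card_filter_not, Finset.card_erase_of_mem hu]
  have hRdeg : R.neighborFinset u = (S.erase u).filter fun w => ¬G.Adj u w := by
    ext w
    simp only [SimpleGraph.mem_neighborFinset, Finset.mem_filter, Finset.mem_erase]
    constructor
    · rintro ⟨h1, h2, h3, h4⟩
      exact ⟨⟨fun h => h3 h.symm, h2⟩, h4⟩
    · rintro ⟨⟨h1, h2⟩, h3⟩
      exact ⟨hu, h2, fun h => h1 h.symm, h3⟩
  have hNS : (G.neighborFinset u).filter (fun v => v ∈ S)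
      = (S.erase u).filter fun w => G.Adj u w := by
    ext w
    simp only [Finset.mem_filter, SimpleGraph.mem_neighborFinset, Finset.mem_erase]
    constructor
    · rintro ⟨h1, h2⟩
      exact ⟨⟨fun h => G.irrefl (h ▸ h1), h2⟩, h1⟩
    · rintro ⟨⟨h1, h2⟩, h3⟩
      exact ⟨h3, h2⟩
  have hdeg : G.degree u ≤ r := le_trans (G.degree_le_maxDegree u) hΔ
  have hRdc : R.degree u = ((S.erase u).filter fun w => ¬G.Adj u w).card := by
    rw [SimpleGraph.degree, hRdeg]
  have hScard : 1 ≤ S.card := Finset.card_pos.2 ⟨u, hu⟩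
  rw [hBu] at *
  rw [hRdc]
  rw [hNS] at hWc
  omega

lemma D_bound {G : SimpleGraph V} {r : ℕ} {T : Finset V} (hT : IsCluster G r T)
    (hTS : T.card + (commonNbrs G T).card = r + 1) (hΔ : G.maxDegree ≤ r) :
    (G.cliqueFinset 3 \ (folding G T).cliqueFinset 3).card
      ≤ (redGraph G (commonNbrs G T)).edgeFinset.card * ((commonNbrs G T).card - 2) := by
  set S := commonNbrs G T with hS
  set R := redGraph G S with hR
  set D := G.cliqueFinset 3 \ (folding G T).cliqueFinset 3 with hD
  set Φ : ℕ := ∑ u, ∑ v, if u ∈ S ∧ IsBlueEdge G T u v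
      then (D.filter fun A => u ∈ A ∧ v ∈ A).card else 0 with hPhi
  have stepA : 2 * D.card ≤ Φ := by
    have hbl : ∀ A ∈ D, 2 ≤ ∑ u, ∑ v,
        (if u ∈ S ∧ IsBlueEdge G T u v ∧ u ∈ A ∧ v ∈ A then 1 else 0 : ℕ) := by
      intro A hA
      rw [Finset.mem_sdiff] at hA
      have h2 := destroyed_two_blue hT hTS hΔ hA.1 hA.2
      rw [Finset.card_filter, Finset.sum_product] at h2
      exact h2
    calc 2 * D.card = ∑ _A ∈ D, 2 := by rw [Finset.sum_const, smul_eq_mul, mul_comm]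
      _ ≤ ∑ A ∈ D, ∑ u, ∑ v,
          (if u ∈ S ∧ IsBlueEdge G T u v ∧ u ∈ A ∧ v ∈ A then 1 else 0 : ℕ) :=
          Finset.sum_le_sum hbl
      _ = ∑ u, ∑ v, ∑ A ∈ D,
          (if u ∈ S ∧ IsBlueEdge G T u v ∧ u ∈ A ∧ v ∈ A then 1 else 0 : ℕ) := by
          rw [Finset.sum_comm]
          exact Finset.sum_congr rfl fun u _ => Finset.sum_comm
      _ = Φ := by
          refine Finset.sum_congr rfl fun u _ => Finset.sum_congr rfl fun v _ => ?_
          by_cases hc : u ∈ S ∧ IsBlueEdge G T u v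
          · rw [if_pos hc, Finset.card_filter]
            refine Finset.sum_congr rfl fun A _ => ?_
            simp [hc.1, hc.2]
          · rw [if_neg hc]
            refine Finset.sum_eq_zero fun A _ => ?_
            rw [if_neg]
            tauto
  have stepB : Φ ≤ (2 * R.edgeFinset.card) * (S.card - 2) := by
    have h1 : Φ ≤ ∑ u, ∑ v, if u ∈ S ∧ IsBlueEdge G T u v then S.card - 2 else 0 := by
      refine Finset.sum_le_sum fun u _ => Finset.sum_le_sum fun v _ => ?_
      by_cases hc : u ∈ S ∧ IsBlueEdge G T u v
      · rw [if_pos hc, if_pos hc]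
        exact fiber_bound hT hTS hΔ hc.1 hc.2 D (Finset.sdiff_subset)
      · rw [if_neg hc, if_neg hc]
    have h2 : ∀ u : V, (∑ v, if u ∈ S ∧ IsBlueEdge G T u v then S.card - 2 else 0)
        ≤ R.degree u * (S.card - 2) := by
      intro u
      by_cases hu : u ∈ S
      · have : (∑ v, if u ∈ S ∧ IsBlueEdge G T u v then S.card - 2 else 0)
            = (Finset.univ.filter fun v => IsBlueEdge G T u v).card * (S.card - 2) := by
          rw [Finset.card_filter, Finset.sum_mul]
          refine Finset.sum_congr rfl fun v _ => ?_
          by_cases hb : IsBlueEdge G T u v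
          · rw [if_pos ⟨hu, hb⟩, if_pos hb, one_mul]
          · rw [if_neg (fun hc => hb hc.2), if_neg hb, zero_mul]
        rw [this]
        exact Nat.mul_le_mul_right _ (blue_nbrs_le hT hTS hΔ hu)
      · refine le_trans (le_of_eq (Finset.sum_eq_zero fun v _ => ?_)) (Nat.zero_le _)
        rw [if_neg (fun hc => hu hc.1)]
    calc Φ ≤ ∑ u, ∑ v, if u ∈ S ∧ IsBlueEdge G T u v then S.card - 2 else 0 := h1
      _ ≤ ∑ u, R.degree u * (S.card - 2) := Finset.sum_le_sum fun u _ => h2 u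
      _ = (∑ u, R.degree u) * (S.card - 2) := by rw [Finset.sum_mul]
      _ = (2 * R.edgeFinset.card) * (S.card - 2) := by
          rw [SimpleGraph.sum_degrees_eq_twice_card_edges]
  have : 2 * D.card ≤ 2 * (R.edgeFinset.card * (S.card - 2)) := by
    rw [← mul_assoc]
    exact le_trans stepA stepB
  omega

lemma new_subset {G : SimpleGraph V} {r : ℕ} {T : Finset V} (hT : IsCluster G r T) :
    ((T ∪ commonNbrs G T).powersetCard 3).filter
        (fun A => ∃ x ∈ A, ∃ y ∈ A, (redGraph G (commonNbrs G T)).Adj x y)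
      ⊆ (folding G T).cliqueFinset 3 \ G.cliqueFinset 3 := by
  intro A hA
  rw [Finset.mem_filter, Finset.mem_powersetCard] at hA
  obtain ⟨⟨hAW, hA3⟩, x, hx, y, hy, hadj⟩ := hA
  rw [Finset.mem_sdiff]
  constructor
  · rw [SimpleGraph.mem_cliqueFinset_iff, SimpleGraph.isNClique_iff]
    refine ⟨?_, hA3⟩
    intro a ha b hb hne
    exact W_clique hT (hAW (Finset.mem_coe.1 ha)) (hAW (Finset.mem_coe.1 hb)) hne
  · intro hG3
    rw [SimpleGraph.mem_cliqueFinset_iff, SimpleGraph.isNClique_iff] at hG3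
    exact hadj.2.2.2 (hG3.1 (Finset.mem_coe.2 hx) (Finset.mem_coe.2 hy) hadj.2.2.1)

lemma red_edges_zero {G : SimpleGraph V} {S : Finset V} (hs : S.card ≤ 1) :
    (redGraph G S).edgeFinset.card = 0 := by
  have hdeg : ∀ u : V, (redGraph G S).degree u = 0 := by
    intro u
    rw [SimpleGraph.degree, Finset.card_eq_zero, Finset.eq_empty_iff_forall_notMem]
    intro w hw
    rw [SimpleGraph.mem_neighborFinset] at hw
    have : 1 < S.card := Finset.one_lt_card.2 ⟨u, hw.1, w, hw.2.1, hw.2.2.1⟩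
    omega
  have := SimpleGraph.sum_degrees_eq_twice_card_edges (redGraph G S)
  rw [Finset.sum_eq_zero fun u _ => hdeg u] at this
  omega


/-- If `T` is a cluster of `G` (with `m` edges and maximum degree at most `r`) such that
`e(B_T) ≥ e(R_T)`, then folding `G` at `T` gains at least `Q(R)` triangles, where
`Q(R) = (r + 1 − s)·e(R) + k₃(R) − Σ_{v ∈ S_T} C(d_R(v), 2)`; moreover the folding has at most
`m` edges and maximum degree at most `r`. -/
theorem folding_gain {V : Type} [Fintype V] [DecidableEq V]
    (G : SimpleGraph V) (r m : ℕ)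
    (hm : G.edgeFinset.card = m) (hΔ : G.maxDegree ≤ r)
    (T : Finset V) (hT : IsCluster G r T)
    (hTS : T.card + (commonNbrs G T).card = r + 1)
    (hRB : (redGraph G (commonNbrs G T)).edgeFinset.card ≤
      (blueGraph G T).edgeFinset.card) :
    ((((folding G T).cliqueFinset 3).card : ℤ) - ((G.cliqueFinset 3).card : ℤ) ≥
      ((r : ℤ) + 1 - ((commonNbrs G T).card : ℤ)) *
          ((redGraph G (commonNbrs G T)).edgeFinset.card : ℤ) +
        (((redGraph G (commonNbrs G T)).cliqueFinset 3).card : ℤ) -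
        ∑ v ∈ commonNbrs G T, (((redGraph G (commonNbrs G T)).degree v).choose 2 : ℤ)) ∧
      (folding G T).edgeFinset.card ≤ m ∧ (folding G T).maxDegree ≤ r := by
  refine ⟨?_, ?_, folding_maxDegree hT hTS hΔ⟩
  · -- triangle count
    set S := commonNbrs G T with hS
    set R := redGraph G S with hR
    set F3 := (folding G T).cliqueFinset 3 with hF3
    set G3 := G.cliqueFinset 3 with hG3
    have hid : (F3.card : ℤ) - (G3.card : ℤ)
        = ((F3 \ G3).card : ℤ) - ((G3 \ F3).card : ℤ) := by
      have h1 := Finset.card_sdiff_add_card_inter F3 G3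
      have h2 := Finset.card_sdiff_add_card_inter G3 F3
      rw [Finset.inter_comm] at h2
      have h1' := congrArg (fun n : ℕ => (n : ℤ)) h1
      have h2' := congrArg (fun n : ℕ => (n : ℤ)) h2
      push_cast at h1' h2'
      linarith
    have hnew : (((((T ∪ S).powersetCard 3).filter
        fun A => ∃ x ∈ A, ∃ y ∈ A, R.Adj x y).card : ℤ)) ≤ ((F3 \ G3).card : ℤ) :=
      Int.ofNat_le.2 (Finset.card_le_card (new_subset hT))
    have hnb := new_bound G r T hT hTS
    have hdb := D_bound hT hTS hΔ
    by_cases hs2 : 2 ≤ S.card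
    · have hdbz : ((G3 \ F3).card : ℤ) ≤ (R.edgeFinset.card : ℤ) * ((S.card : ℤ) - 2) := by
        calc ((G3 \ F3).card : ℤ) ≤ ((R.edgeFinset.card * (S.card - 2) : ℕ) : ℤ) :=
            Int.ofNat_le.2 hdb
          _ = _ := by push_cast [Nat.cast_sub hs2]; ring
      have hring : (R.edgeFinset.card : ℤ) * ((r : ℤ) - 1)
          = ((r : ℤ) + 1 - (S.card : ℤ)) * (R.edgeFinset.card : ℤ)
            + (R.edgeFinset.card : ℤ) * ((S.card : ℤ) - 2) := by ring
      linarith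
    · have he0 : R.edgeFinset.card = 0 := red_edges_zero (by omega)
      have hdbz : ((G3 \ F3).card : ℤ) ≤ 0 := by
        rw [he0, Nat.zero_mul] at hdb
        exact_mod_cast Int.ofNat_le.2 hdb
      rw [he0] at hnb ⊢
      push_cast at hnb ⊢
      linarith
  · -- edge count
    have hkey := folding_edge_card (G := G) (T := T)
    have hble : (blueGraph G T).edgeFinset.card ≤ G.edgeFinset.card :=
      Finset.card_le_card (SimpleGraph.edgeFinset_mono (blue_le_G G T))
    omega
end
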